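/- arXiv:1304.1839 — 4 statements merged into one kernel-verified Lean document; each statement's English description precedes it below -/
import Mathlib

section
/- The following are equivalent: (i) the map α is injective up to a global phase; (ii) there exists a constant a₀ > 0 such that for all u, v ∈ ℂⁿ, Σ_{k=1}^m ( Re(⟨u,f_k⟩⟨f_k,v⟩) )² ≥ a₀ · ( ‖u‖²‖v‖² − (Im⟨u,v⟩)² ). -/
open scoped BigOperators ComplexConjugate
open Matrix

noncomputable section

/-- Inner product on `ℂⁿ`, linear in the first argument: `⟨x,y⟩ = ∑ⱼ xⱼ conj(yⱼ)`. -/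
def cip {n : ℕ} (x y : Fin n → ℂ) : ℂ := ∑ j, x j * (starRingEnd ℂ) (y j)

/-- Squared Euclidean norm on `ℂⁿ`. -/
def cnSq {n : ℕ} (x : Fin n → ℂ) : ℝ := ∑ j, Complex.normSq (x j)

/-- The phaseless measurement map `α(x)ₖ = |⟨x,fₖ⟩|²`. -/
def alphaMap {n m : ℕ} (f : Fin m → Fin n → ℂ) (x : Fin n → ℂ) : Fin m → ℝ :=
  fun k => Complex.normSq (cip x (f k))

/-- `α` is injective up to a global phase. -/
def InjUpToPhase {n m : ℕ} (f : Fin m → Fin n → ℂ) : Prop :=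
  ∀ x y : Fin n → ℂ, alphaMap f x = alphaMap f y → ∃ c : ℂ, ‖c‖ = 1 ∧ y = c • x

section Aux

variable {n m : ℕ}

lemma cip_add_left (x y z : Fin n → ℂ) : cip (x + y) z = cip x z + cip y z := by
  simp [cip, add_mul, Finset.sum_add_distrib]

lemma cip_smul_left (c : ℂ) (x y : Fin n → ℂ) : cip (c • x) y = c * cip x y := by
  simp [cip, Finset.mul_sum, mul_assoc]

lemma cip_conj (x y : Fin n → ℂ) : cip y x = conj (cip x y) := by
  simp [cip, map_sum, mul_comm]

lemma cip_add_right (x y z : Fin n → ℂ) : cip x (y + z) = cip x y + cip x z := by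
  rw [cip_conj, cip_add_left, _root_.map_add, ← cip_conj, ← cip_conj]

lemma cip_sub_left (x y z : Fin n → ℂ) : cip (x - y) z = cip x z - cip y z := by
  simp [cip, sub_mul, Finset.sum_sub_distrib]

lemma cip_sub_right (x y z : Fin n → ℂ) : cip x (y - z) = cip x y - cip x z := by
  rw [cip_conj, cip_sub_left, _root_.map_sub, ← cip_conj, ← cip_conj]

lemma cip_smul_right (c : ℂ) (x y : Fin n → ℂ) : cip x (c • y) = conj c * cip x y := by
  rw [cip_conj, cip_smul_left, _root_.map_mul, ← cip_conj]

lemma cip_self (x : Fin n → ℂ) : cip x x = (cnSq x : ℂ) := by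
  simp [cip, cnSq, Complex.mul_conj]

lemma cnSq_nonneg (x : Fin n → ℂ) : 0 ≤ cnSq x :=
  Finset.sum_nonneg fun _ _ => Complex.normSq_nonneg _

lemma cnSq_eq_zero {x : Fin n → ℂ} (h : cnSq x = 0) : x = 0 := by
  funext j
  have := (Finset.sum_eq_zero_iff_of_nonneg (fun i _ => Complex.normSq_nonneg (x i))).1 h j
    (Finset.mem_univ j)
  exact Complex.normSq_eq_zero.mp this

lemma cnSq_pos {x : Fin n → ℂ} (hx : x ≠ 0) : 0 < cnSq x :=
  (cnSq_nonneg x).lt_of_ne' fun h => hx (cnSq_eq_zero h)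

lemma cnSq_smul (c : ℂ) (x : Fin n → ℂ) : cnSq (c • x) = Complex.normSq c * cnSq x := by
  simp [cnSq, Complex.normSq_mul, Finset.mul_sum]

def toE {n : ℕ} (x : Fin n → ℂ) : EuclideanSpace ℂ (Fin n) := WithLp.toLp 2 x

lemma cip_eq_inner (u v : Fin n → ℂ) : cip u v = inner (𝕜 := ℂ) (toE v) (toE u) := by
  simp only [cip, toE, PiLp.inner_apply, RCLike.inner_apply, PiLp.toLp_apply]

lemma cnSq_eq_normE (u : Fin n → ℂ) : cnSq u = ‖toE u‖ ^ 2 := by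
  rw [EuclideanSpace.norm_eq, Real.sq_sqrt (by positivity)]
  simp [cnSq, toE, Complex.normSq_eq_norm_sq]

lemma normSq_eq_normsq (z : ℂ) : Complex.normSq z = ‖z‖ ^ 2 := by
  rw [Complex.normSq_eq_norm_sq]

lemma cip_cs (u v : Fin n → ℂ) : Complex.normSq (cip u v) ≤ cnSq u * cnSq v := by
  have h := norm_inner_le_norm (𝕜 := ℂ) (toE v) (toE u)
  rw [normSq_eq_normsq, cip_eq_inner, cnSq_eq_normE, cnSq_eq_normE]
  calc ‖inner (𝕜 := ℂ) (toE v) (toE u)‖ ^ 2 ≤ (‖toE v‖ * ‖toE u‖) ^ 2 := by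
        exact pow_le_pow_left₀ (norm_nonneg _) h 2
    _ = ‖toE u‖ ^ 2 * ‖toE v‖ ^ 2 := by ring

lemma cip_eq_case {u v : Fin n → ℂ} (hu : u ≠ 0) (hv : v ≠ 0)
    (h : Complex.normSq (cip u v) = cnSq u * cnSq v) :
    ∃ r : ℂ, r ≠ 0 ∧ v = r • u := by
  have hu' : toE u ≠ 0 := fun h => hu (by simpa [toE] using congrArg WithLp.ofLp h)
  have hv' : toE v ≠ 0 := fun h => hv (by simpa [toE] using congrArg WithLp.ofLp h)
  have key : ‖inner (𝕜 := ℂ) (toE u) (toE v)‖ = ‖toE u‖ * ‖toE v‖ := by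
    have h1 : Complex.normSq (cip v u) = cnSq u * cnSq v := by
      rw [cip_conj, Complex.normSq_conj, h]
    rw [cip_eq_inner] at h1
    have h2 : ‖inner (𝕜 := ℂ) (toE u) (toE v)‖ ^ 2 = (‖toE u‖ * ‖toE v‖) ^ 2 := by
      rw [← normSq_eq_normsq, h1, cnSq_eq_normE, cnSq_eq_normE]; ring
    rw [← Real.sqrt_sq (norm_nonneg _), h2, Real.sqrt_sq (by positivity)]
  obtain ⟨r, hr0, hr⟩ := (norm_inner_eq_norm_iff hu' hv').1 key
  exact ⟨r, hr0, by simpa [toE] using congrArg WithLp.ofLp hr⟩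

def Sf (f : Fin m → Fin n → ℂ) (u v : Fin n → ℂ) : ℝ :=
  ∑ k, ((cip u (f k) * cip (f k) v).re) ^ 2
def Qp (u v : Fin n → ℂ) : ℝ :=
  (cnSq u * cnSq v + (cip u v).re ^ 2 - (cip u v).im ^ 2) / 2

/-- polarization -/
lemma polar (x y g : Fin n → ℂ) :
    (cip (x + y) g * cip g (x - y)).re
      = Complex.normSq (cip x g) - Complex.normSq (cip y g) := by
  rw [cip_add_left, show cip g (x - y) = conj (cip (x - y) g) from cip_conj _ _, cip_sub_left]
  set p := cip x g; set q := cip y g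
  simp only [Complex.mul_re, Complex.normSq_apply, Complex.sub_re, Complex.sub_im,
    Complex.add_re, Complex.add_im, Complex.conj_re, Complex.conj_im]
  ring

lemma cnSq_add_smul (u v : Fin n → ℂ) (c : ℂ) :
    cnSq (v + c • u) = cnSq v + Complex.normSq c * cnSq u + 2 * (c * cip u v).re := by
  have h1 : (cnSq (v + c • u) : ℂ) = cip (v + c • u) (v + c • u) := (cip_self _).symm
  rw [cip_add_left, cip_add_right, cip_add_right, cip_smul_left, cip_smul_right,
    cip_smul_left, cip_smul_right, cip_self, cip_self, cip_conj u v] at h1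
  have := congrArg Complex.re h1
  simp only [Complex.ofReal_re, Complex.add_re, Complex.mul_re, Complex.ofReal_im,
    Complex.conj_re, Complex.conj_im, Complex.mul_im] at this
  rw [this, Complex.normSq_apply, Complex.mul_re]; ring

lemma cip_shear (u v : Fin n → ℂ) (t : ℝ) :
    cip u (v + (Complex.I * t) • u) = cip u v - Complex.I * t * cnSq u := by
  rw [cip_add_right, cip_smul_right, cip_self, _root_.map_mul, Complex.conj_I, Complex.conj_ofReal]
  ring

lemma Sf_shear (f : Fin m → Fin n → ℂ) (u v : Fin n → ℂ) (t : ℝ) :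
    Sf f u (v + (Complex.I * t) • u) = Sf f u v := by
  unfold Sf
  refine Finset.sum_congr rfl fun k _ => ?_
  rw [cip_add_right, cip_smul_right, _root_.map_mul, Complex.conj_I, Complex.conj_ofReal, mul_add]
  have h : cip u (f k) * (-Complex.I * t * cip (f k) u)
      = -Complex.I * t * Complex.normSq (cip u (f k)) := by
    rw [cip_conj u (f k), ← Complex.mul_conj (cip u (f k))]
    ring
  rw [h, Complex.add_re]
  norm_num [Complex.mul_re, Complex.mul_im]

lemma Qp_shear (u v : Fin n → ℂ) (t : ℝ) :
    Qp u (v + (Complex.I * t) • u) = Qp u v := by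
  unfold Qp
  rw [cip_shear, cnSq_add_smul]
  have h1 : Complex.normSq (Complex.I * t) = t ^ 2 := by
    simp [Complex.normSq_mul]; ring
  have h2 : (Complex.I * t * cip u v).re = -(t * (cip u v).im) := by
    simp [Complex.mul_re, Complex.mul_im]
  have h3 : (cip u v - Complex.I * t * cnSq u).re = (cip u v).re := by
    simp [Complex.sub_re, Complex.mul_re, Complex.mul_im]
  have h4 : (cip u v - Complex.I * t * cnSq u).im = (cip u v).im - t * cnSq u := by
    simp [Complex.sub_im, Complex.mul_im, Complex.mul_re]
  rw [h1, h2, h3, h4]; ring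

lemma Sf_scale (f : Fin m → Fin n → ℂ) (u v : Fin n → ℂ) (s r : ℝ) :
    Sf f ((s : ℂ) • u) ((r : ℂ) • v) = s ^ 2 * r ^ 2 * Sf f u v := by
  unfold Sf
  rw [Finset.mul_sum]
  refine Finset.sum_congr rfl fun k _ => ?_
  rw [cip_smul_left, cip_smul_right, Complex.conj_ofReal]
  have : (s : ℂ) * cip u (f k) * ((r : ℂ) * cip (f k) v)
      = ((s * r : ℝ) : ℂ) * (cip u (f k) * cip (f k) v) := by push_cast; ring
  rw [this, Complex.re_ofReal_mul]
  ring

lemma Qp_scale (u v : Fin n → ℂ) (s r : ℝ) :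
    Qp ((s : ℂ) • u) ((r : ℂ) • v) = s ^ 2 * r ^ 2 * Qp u v := by
  unfold Qp
  rw [cnSq_smul, cnSq_smul, cip_smul_left, cip_smul_right, Complex.conj_ofReal]
  have h : (s : ℂ) * ((r : ℂ) * cip u v) = ((s * r : ℝ) : ℂ) * cip u v := by push_cast; ring
  rw [h, Complex.re_ofReal_mul, Complex.im_ofReal_mul, Complex.normSq_ofReal,
    Complex.normSq_ofReal]
  ring

lemma Qp_zero_left (v : Fin n → ℂ) : Qp 0 v = 0 := by
  simp [Qp, cnSq, cip]

lemma reduce (f : Fin m → Fin n → ℂ) (u v : Fin n → ℂ) (hq : 0 < Qp u v) :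
    ∃ w₁ w₂ : Fin n → ℂ, cnSq w₁ ≤ 2 ∧ cnSq w₂ ≤ 2 ∧ Qp w₁ w₂ = 1 ∧
      Sf f u v = Qp u v * Sf f w₁ w₂ := by
  have hu : u ≠ 0 := by
    rintro rfl; rw [Qp_zero_left] at hq; exact lt_irrefl 0 hq
  set A := cnSq u with hA
  have hA0 : 0 < A := cnSq_pos hu
  set t : ℝ := (cip u v).im / A with ht
  set v₁ := v + (Complex.I * t) • u with hv₁
  have hQ1 : Qp u v₁ = Qp u v := Qp_shear u v t
  have hS1 : Sf f u v₁ = Sf f u v := Sf_shear f u v t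
  have hb1 : (cip u v₁).im = 0 := by
    rw [hv₁, cip_shear]
    simp only [Complex.sub_im, Complex.mul_im, Complex.mul_re, Complex.I_re, Complex.I_im,
      Complex.ofReal_re, Complex.ofReal_im]
    rw [ht]; field_simp; rw [← hA]; ring
  set B := cnSq v₁ with hB
  set q := Qp u v with hqd
  -- key size relations
  have hnormsq : Complex.normSq (cip u v₁) = (cip u v₁).re ^ 2 := by
    rw [Complex.normSq_apply, hb1]; ring
  have hcs : (cip u v₁).re ^ 2 ≤ A * B := by rw [← hnormsq]; exact cip_cs u v₁
  have hqAB : 2 * q = A * B + (cip u v₁).re ^ 2 := by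
    have h2 : Qp u v₁ = (A * B + (cip u v₁).re ^ 2 - 0) / 2 := by
      rw [Qp, ← hA, ← hB, hb1]; ring_nf
    have h3 : (A * B + (cip u v₁).re ^ 2 - 0) / 2 = q := by rw [← h2, hQ1]
    linarith
  have hABle : A * B ≤ 2 * q := by rw [hqAB]; nlinarith [sq_nonneg (cip u v₁).re]
  have hqle : q ≤ A * B := by nlinarith
  have hB0 : 0 < B := by nlinarith
  have hq0 : 0 < q := hq
  -- scaling factors
  set Y := Real.sqrt (B / (A * q)) with hY
  set Z := Real.sqrt (A / (B * q)) with hZ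
  have hY0 : 0 < Y := Real.sqrt_pos.2 (by positivity)
  have hZ0 : 0 < Z := Real.sqrt_pos.2 (by positivity)
  set σ := Real.sqrt Y with hσ
  set τ := Real.sqrt Z with hτ
  have hσ2 : σ ^ 2 = Y := Real.sq_sqrt hY0.le
  have hτ2 : τ ^ 2 = Z := Real.sq_sqrt hZ0.le
  have hYZ : Y * Z = 1 / q := by
    rw [hY, hZ, ← Real.sqrt_mul (by positivity)]
    have : B / (A * q) * (A / (B * q)) = (1 / q) ^ 2 := by field_simp
    rw [this, Real.sqrt_sq (by positivity)]
  have hYA : Y * A = Real.sqrt (A * B / q) := by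
    have h1 : A * B / q = B / (A * q) * A ^ 2 := by field_simp
    rw [h1, Real.sqrt_mul (by positivity), Real.sqrt_sq hA0.le, hY]
  have hZB : Z * B = Real.sqrt (A * B / q) := by
    have h1 : A * B / q = A / (B * q) * B ^ 2 := by field_simp
    rw [h1, Real.sqrt_mul (by positivity), Real.sqrt_sq hB0.le, hZ]
  have hABq2 : A * B / q ≤ 2 := by rw [div_le_iff₀ hq0]; linarith
  have hsqrt2 : Real.sqrt (A * B / q) ≤ 2 := by
    have h1 : Real.sqrt (A * B / q) ≤ Real.sqrt 2 := Real.sqrt_le_sqrt hABq2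
    have h2 : Real.sqrt 2 ≤ 2 := by
      nlinarith [Real.sq_sqrt (by norm_num : (0:ℝ) ≤ 2), Real.sqrt_nonneg 2]
    linarith
  refine ⟨(σ : ℂ) • u, (τ : ℂ) • v₁, ?_, ?_, ?_, ?_⟩
  · rw [cnSq_smul, Complex.normSq_ofReal, ← hA]
    calc σ * σ * A = σ ^ 2 * A := by ring
      _ = Real.sqrt (A * B / q) := by rw [hσ2, hYA]
      _ ≤ 2 := hsqrt2
  · rw [cnSq_smul, Complex.normSq_ofReal, ← hB]
    calc τ * τ * B = τ ^ 2 * B := by ring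
      _ = Real.sqrt (A * B / q) := by rw [hτ2, hZB]
      _ ≤ 2 := hsqrt2
  · rw [Qp_scale, hQ1, hσ2, hτ2]
    rw [hYZ]; field_simp
  · rw [Sf_scale, hS1, hσ2, hτ2, hYZ]
    field_simp

/-- If `y = c • x` with `|c| = 1` then `Q(x+y, x-y) = 0`. -/
lemma Qzero (x : Fin n → ℂ) (c : ℂ) (hc : ‖c‖ = 1) :
    cnSq (x + c • x) * cnSq (x - c • x) - (cip (x + c • x) (x - c • x)).im ^ 2 = 0 := by
  have hc1 : Complex.normSq c = 1 := by
    rw [Complex.normSq_eq_norm_sq, hc]; norm_num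
  have hcc : c * conj c = 1 := by rw [Complex.mul_conj, hc1]; norm_num
  have h1 : x + c • x = ((1 + c) : ℂ) • x := by rw [add_smul, one_smul]
  have h2 : x - c • x = ((1 - c) : ℂ) • x := by rw [sub_smul, one_smul]
  rw [h1, h2, cnSq_smul, cnSq_smul, cip_smul_left, cip_smul_right, cip_self]
  set X := cnSq x
  have hz : (1 + c) * conj (1 - c) = c - conj c := by
    rw [_root_.map_sub, _root_.map_one]; linear_combination -hcc
  have h3 : Complex.normSq (1 + c) * Complex.normSq (1 - c)
      = Complex.normSq (c - conj c) := by
    rw [← hz, Complex.normSq_mul, Complex.normSq_conj]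
  have h4 : ((1 + c) * (conj (1 - c) * (X : ℂ))).im = (c - conj c).im * X := by
    rw [← mul_assoc, hz]
    simp [Complex.mul_im]
  have h5 : Complex.normSq (c - conj c) = (c - conj c).im ^ 2 := by
    have hre : (c - conj c).re = 0 := by simp [Complex.sub_re]
    rw [Complex.normSq_apply, hre]; ring
  rw [h4]
  linear_combination X ^ 2 * h3 + X ^ 2 * h5

/-- If `Q(x+y,x-y) ≤ 0` then `y` is a unimodular multiple of `x`. -/
lemma phase_of_Q (x y : Fin n → ℂ)
    (hQ : cnSq (x + y) * cnSq (x - y) - (cip (x + y) (x - y)).im ^ 2 ≤ 0) :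
    ∃ c : ℂ, ‖c‖ = 1 ∧ y = c • x := by
  set u := x + y with hu
  set v := x - y with hv
  have hcs := cip_cs u v
  have hnn : Complex.normSq (cip u v) = (cip u v).re ^ 2 + (cip u v).im ^ 2 := by
    rw [Complex.normSq_apply]; ring
  by_cases hu0 : u = 0
  · refine ⟨-1, by norm_num, ?_⟩
    have : y = -x := by
      have := hu0; rw [hu] at this
      linear_combination (norm := module) this
    rw [this]; module
  by_cases hv0 : v = 0
  · refine ⟨1, by norm_num, ?_⟩
    have : y = x := by
      have := hv0; rw [hv] at this
      linear_combination (norm := module) -this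
    rw [this]; module
  have hA0 : 0 < cnSq u := cnSq_pos hu0
  have hB0 : 0 < cnSq v := cnSq_pos hv0
  have hre : (cip u v).re = 0 := by nlinarith
  have heq : Complex.normSq (cip u v) = cnSq u * cnSq v := by nlinarith
  obtain ⟨r, hr0, hvr⟩ := cip_eq_case hu0 hv0 heq
  have hrre : r.re = 0 := by
    have h1 : cip u v = conj r * (cnSq u : ℂ) := by rw [hvr, cip_smul_right, cip_self]
    have h2 : (cip u v).re = r.re * cnSq u := by
      rw [h1]; simp [Complex.mul_re]
    rw [h2] at hre
    exact (mul_eq_zero.mp hre).resolve_right (by positivity)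
  have h1r : (1 : ℂ) + r ≠ 0 := by
    intro h
    have : ((1 : ℂ) + r).re = 0 := by rw [h]; simp
    simp [Complex.add_re, hrre] at this
  refine ⟨(1 - r) / (1 + r), ?_, ?_⟩
  · rw [norm_div, div_eq_one_iff_eq (norm_ne_zero_iff.2 h1r)]
    have : Complex.normSq (1 - r) = Complex.normSq (1 + r) := by
      simp [Complex.normSq_apply, Complex.sub_re, Complex.add_re, Complex.sub_im,
        Complex.add_im, hrre]
    rw [Complex.norm_def, Complex.norm_def, this]
  · have hxy : x - y = r • (x + y) := by rw [← hu, ← hv]; exact hvr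
    have h2 : ((1 : ℂ) + r) • y = ((1 : ℂ) - r) • x := by
      linear_combination (norm := module) -hxy
    have h3 : y = (((1 : ℂ) + r)⁻¹ * (1 - r)) • x := by
      rw [← smul_smul, ← h2, inv_smul_smul₀ h1r]
    rw [h3, div_eq_inv_mul]

lemma cont_cip : Continuous fun p : (Fin n → ℂ) × (Fin n → ℂ) => cip p.1 p.2 := by
  unfold cip
  exact continuous_finset_sum _ fun j _ =>
    (((continuous_apply j).comp continuous_fst).mul
      (Complex.continuous_conj.comp ((continuous_apply j).comp continuous_snd)))

lemma cont_cnSq : Continuous fun x : Fin n → ℂ => cnSq x := by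
  unfold cnSq
  exact continuous_finset_sum _ fun j _ => Complex.continuous_normSq.comp (continuous_apply j)

lemma cont_Sf (f : Fin m → Fin n → ℂ) :
    Continuous fun p : (Fin n → ℂ) × (Fin n → ℂ) => Sf f p.1 p.2 := by
  unfold Sf
  refine continuous_finset_sum _ fun k _ => ?_
  have h1 : Continuous fun p : (Fin n → ℂ) × (Fin n → ℂ) => cip p.1 (f k) :=
    cont_cip.comp (continuous_fst.prodMk continuous_const)
  have h2 : Continuous fun p : (Fin n → ℂ) × (Fin n → ℂ) => cip (f k) p.2 :=
    cont_cip.comp (continuous_const.prodMk continuous_snd)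
  exact ((Complex.continuous_re.comp (h1.mul h2)).pow 2)

lemma cont_Qp : Continuous fun p : (Fin n → ℂ) × (Fin n → ℂ) => Qp p.1 p.2 := by
  unfold Qp
  apply Continuous.div_const
  exact (((cont_cnSq.comp continuous_fst).mul (cont_cnSq.comp continuous_snd)).add
    ((Complex.continuous_re.comp cont_cip).pow 2)).sub
    ((Complex.continuous_im.comp cont_cip).pow 2)

lemma Sf_nonneg (f : Fin m → Fin n → ℂ) (u v : Fin n → ℂ) : 0 ≤ Sf f u v :=
  Finset.sum_nonneg fun _ _ => sq_nonneg _

lemma Qp_le_Q (u v : Fin n → ℂ) :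
    Qp u v ≤ cnSq u * cnSq v - (cip u v).im ^ 2 := by
  have h := cip_cs u v
  rw [Complex.normSq_apply] at h
  unfold Qp
  nlinarith [h]


end Aux

/-- For a frame `F = {f₁,…,f_m}` of `ℂⁿ`, the map `α` is injective up to a
global phase iff there is `a₀ > 0` with
`∑ₖ (Re(⟨u,fₖ⟩⟨fₖ,v⟩))² ≥ a₀ (‖u‖²‖v‖² − (Im⟨u,v⟩)²)` for all `u, v ∈ ℂⁿ`. -/
theorem stmt0 (n m : ℕ) (f : Fin m → Fin n → ℂ)
    (hspan : Submodule.span ℂ (Set.range f) = ⊤) :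
    InjUpToPhase f ↔
      ∃ a₀ : ℝ, 0 < a₀ ∧ ∀ u v : Fin n → ℂ,
        a₀ * (cnSq u * cnSq v - (cip u v).im ^ 2)
          ≤ ∑ k, ((cip u (f k) * cip (f k) v).re) ^ 2 := by
  constructor
  · intro hinj
    -- handle n = 0
    rcases Nat.eq_zero_or_pos n with hn | hn
    · refine ⟨1, one_pos, fun u v => ?_⟩
      subst hn
      have h1 : cnSq u = 0 := by simp [cnSq]
      have h2 : cip u v = 0 := by simp [cip]
      rw [h1, h2]
      simp only [zero_mul, Complex.zero_im]
      have : (0:ℝ) ≤ ∑ k, ((cip u (f k) * cip (f k) v).re) ^ 2 :=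
        Finset.sum_nonneg fun _ _ => sq_nonneg _
      nlinarith
    set K : Set ((Fin n → ℂ) × (Fin n → ℂ)) :=
      {p | cnSq p.1 ≤ 2 ∧ cnSq p.2 ≤ 2 ∧ Qp p.1 p.2 = 1} with hK
    -- K is compact
    have hclosed : IsClosed K := by
      refine IsClosed.inter (isClosed_le (cont_cnSq.comp continuous_fst) continuous_const)
        (IsClosed.inter (isClosed_le (cont_cnSq.comp continuous_snd) continuous_const)
          (isClosed_eq cont_Qp continuous_const))
    have hbdd : Bornology.IsBounded K := by
      apply (Metric.isBounded_closedBall (x := (0 : (Fin n → ℂ) × (Fin n → ℂ))) (r := 2)).subset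
      rintro ⟨p1, p2⟩ ⟨h1, h2, _⟩
      rw [Metric.mem_closedBall, dist_zero_right]
      rw [Prod.norm_def]
      have key : ∀ (w : Fin n → ℂ), cnSq w ≤ 2 → ‖w‖ ≤ 2 := by
        intro w hw
        rw [pi_norm_le_iff_of_nonneg (by norm_num)]
        intro j
        have h3 : Complex.normSq (w j) ≤ 2 := by
          refine le_trans ?_ hw
          exact Finset.single_le_sum (f := fun i => Complex.normSq (w i))
            (fun i _ => Complex.normSq_nonneg _) (Finset.mem_univ j)
        have h4 : ‖w j‖ ^ 2 = Complex.normSq (w j) := by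
          rw [Complex.normSq_eq_norm_sq]
        nlinarith [norm_nonneg (w j)]
      exact max_le (key p1 h1) (key p2 h2)
    haveI : ProperSpace ((Fin n → ℂ) × (Fin n → ℂ)) :=
      FiniteDimensional.proper ℂ ((Fin n → ℂ) × (Fin n → ℂ))
    have hcpt : IsCompact K := Metric.isCompact_of_isClosed_isBounded hclosed hbdd
    -- K is nonempty
    have hKne : K.Nonempty := by
      set e : Fin n → ℂ := fun j => if j = ⟨0, hn⟩ then 1 else 0 with he
      have h1 : cnSq e = 1 := by
        rw [cnSq, he]
        rw [Finset.sum_eq_single ⟨0, hn⟩]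
        · simp
        · intro b _ hb; simp [hb]
        · simp
      have h2 : cip e e = 1 := by
        rw [cip, he]
        rw [Finset.sum_eq_single ⟨0, hn⟩]
        · simp
        · intro b _ hb; simp [hb]
        · simp
      have hmem : (e, e) ∈ K := by
        refine ⟨?_, ?_, ?_⟩
        · show cnSq e ≤ 2; rw [h1]; norm_num
        · show cnSq e ≤ 2; rw [h1]; norm_num
        · show Qp e e = 1; simp only [Qp, h1, h2]; norm_num
      exact ⟨(e, e), hmem⟩
    obtain ⟨p, hpK, hmin⟩ := hcpt.exists_isMinOn hKne (cont_Sf f).continuousOn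
    set c := Sf f p.1 p.2 with hcdef
    have hc0 : 0 ≤ c := Sf_nonneg f _ _
    have hcpos : 0 < c := by
      rcases hc0.lt_or_eq with h | h
      · exact h
      exfalso
      have hterm : ∀ k, (cip p.1 (f k) * cip (f k) p.2).re = 0 := by
        intro k
        have h1 := (Finset.sum_eq_zero_iff_of_nonneg
          (fun i (_ : i ∈ Finset.univ) => sq_nonneg ((cip p.1 (f i) * cip (f i) p.2).re))).1
          h.symm k (Finset.mem_univ k)
        exact (pow_eq_zero_iff two_ne_zero).mp h1
      set x := (2⁻¹ : ℂ) • (p.1 + p.2) with hx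
      set y := (2⁻¹ : ℂ) • (p.1 - p.2) with hy
      have hxy1 : x + y = p.1 := by rw [hx, hy]; module
      have hxy2 : x - y = p.2 := by rw [hx, hy]; module
      have hα : alphaMap f x = alphaMap f y := by
        funext k
        have h2 : Complex.normSq (cip x (f k)) - Complex.normSq (cip y (f k)) = 0 := by
          rw [← polar x y (f k), hxy1, hxy2]; exact hterm k
        simp only [alphaMap]
        linarith
      obtain ⟨cc, hcc1, hccx⟩ := hinj x y hα
      have hQ0 := Qzero x cc hcc1
      rw [← hccx, hxy1, hxy2] at hQ0
      have hle := Qp_le_Q p.1 p.2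
      have hone : Qp p.1 p.2 = 1 := hpK.2.2
      linarith
    refine ⟨c / 2, by positivity, fun u v => ?_⟩
    show c / 2 * (cnSq u * cnSq v - (cip u v).im ^ 2) ≤ Sf f u v
    by_cases hq : 0 < Qp u v
    · obtain ⟨w₁, w₂, hw1, hw2, hwq, hS⟩ := reduce f u v hq
      have hmem : (w₁, w₂) ∈ K := ⟨hw1, hw2, hwq⟩
      have h1 : c ≤ Sf f w₁ w₂ := isMinOn_iff.mp hmin (w₁, w₂) hmem
      have hQle : cnSq u * cnSq v - (cip u v).im ^ 2 ≤ 2 * Qp u v := by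
        rw [Qp]; nlinarith [sq_nonneg (cip u v).re]
      calc c / 2 * (cnSq u * cnSq v - (cip u v).im ^ 2)
          ≤ c / 2 * (2 * Qp u v) := by
            exact mul_le_mul_of_nonneg_left hQle (by positivity)
        _ = c * Qp u v := by ring
        _ ≤ Sf f w₁ w₂ * Qp u v := mul_le_mul_of_nonneg_right h1 hq.le
        _ = Sf f u v := by rw [hS]; ring
    · push_neg at hq
      have hQle : cnSq u * cnSq v - (cip u v).im ^ 2 ≤ 0 := by
        rw [Qp] at hq; nlinarith [sq_nonneg (cip u v).re]
      calc c / 2 * (cnSq u * cnSq v - (cip u v).im ^ 2)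
          ≤ 0 := mul_nonpos_of_nonneg_of_nonpos (by positivity) hQle
        _ ≤ Sf f u v := Sf_nonneg f u v
  · intro ⟨a₀, ha₀, hineq⟩ x y hα
    apply phase_of_Q
    have hzero : ∀ k, (cip (x + y) (f k) * cip (f k) (x - y)).re = 0 := by
      intro k
      rw [polar]
      have := congrFun hα k
      simp only [alphaMap] at this
      rw [this]; ring
    have h1 := hineq (x + y) (x - y)
    rw [Finset.sum_eq_zero (fun k _ => by rw [hzero k]; ring)] at h1
    nlinarith
end
end

section
/- The following are equivalent: (i) for every nonzero ξ ∈ ℝ^{2n}, rank R(ξ) = 2n − 1; (ii) there exists a₀ > 0 such that for every ξ ∈ ℝ^{2n}, R(ξ) ⪰ a₀·( ‖ξ‖² I − Jξξᵀ Jᵀ ) in the sense of real quadratic forms (the right-hand side equals a₀‖ξ‖² times the orthogonal projection onto the orthogonal complement of Jξ when ξ ≠ 0). -/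
open scoped BigOperators ComplexConjugate
open Matrix

noncomputable section

/-- Identification `ι : ℂⁿ → ℝ²ⁿ`, `ι(x) = (Re x, Im x)`. -/
def iotaR {n : ℕ} (x : Fin n → ℂ) : Fin n ⊕ Fin n → ℝ :=
  Sum.elim (fun j => (x j).re) (fun j => (x j).im)

/-- The `2n×2n` matrix `J = [[0, −Iₙ],[Iₙ, 0]]`. -/
def Jmat (n : ℕ) : Matrix (Fin n ⊕ Fin n) (Fin n ⊕ Fin n) ℝ :=
  Matrix.fromBlocks 0 (-1) 1 0

/-- `Φₖ = φₖφₖᵀ + Jφₖφₖᵀ Jᵀ` with `φₖ = ι(fₖ)`. -/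
def PhiMat {n : ℕ} (fk : Fin n → ℂ) : Matrix (Fin n ⊕ Fin n) (Fin n ⊕ Fin n) ℝ :=
  Matrix.vecMulVec (iotaR fk) (iotaR fk)
    + Jmat n * Matrix.vecMulVec (iotaR fk) (iotaR fk) * (Jmat n)ᵀ

/-- `R(ξ) = ∑ₖ Φₖ ξξᵀ Φₖ`. -/
def Rmat {n m : ℕ} (f : Fin m → Fin n → ℂ) (ξ : Fin n ⊕ Fin n → ℝ) :
    Matrix (Fin n ⊕ Fin n) (Fin n ⊕ Fin n) ℝ :=
  ∑ k, PhiMat (f k) * Matrix.vecMulVec ξ ξ * PhiMat (f k)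

set_option linter.unusedSectionVars false


section aux
variable {ι : Type*} [Fintype ι] [DecidableEq ι] {n : ℕ}

lemma mul_vecMulVec' (M : Matrix ι ι ℝ) (a b : ι → ℝ) :
    M * Matrix.vecMulVec a b = Matrix.vecMulVec (M *ᵥ a) b := by
  ext i j
  simp [Matrix.mul_apply, Matrix.vecMulVec_apply, Matrix.mulVec, dotProduct,
    Finset.sum_mul, mul_assoc]

lemma vecMulVec_mul' (a b : ι → ℝ) (M : Matrix ι ι ℝ) :
    Matrix.vecMulVec a b * M = Matrix.vecMulVec a (Mᵀ *ᵥ b) := by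
  ext i j
  simp [Matrix.mul_apply, Matrix.vecMulVec_apply, Matrix.mulVec, dotProduct,
    Finset.mul_sum, Matrix.transpose_apply, mul_assoc]
  exact Finset.sum_congr rfl fun k _ => by ring

lemma vecMulVec_mulVec' (a b x : ι → ℝ) :
    Matrix.vecMulVec a b *ᵥ x = (b ⬝ᵥ x) • a := by
  ext i
  simp only [Matrix.mulVec, Matrix.vecMulVec_apply, dotProduct, Pi.smul_apply,
    smul_eq_mul, Finset.sum_mul]
  exact Finset.sum_congr rfl fun k _ => by ring

lemma vecMulVec_transpose' (a b : ι → ℝ) :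
    (Matrix.vecMulVec a b)ᵀ = Matrix.vecMulVec b a := by
  ext i j; simp [Matrix.vecMulVec_apply, mul_comm]

lemma Jmat_transpose (n : ℕ) : (Jmat n)ᵀ = -(Jmat n) := by
  simp [Jmat, Matrix.fromBlocks_transpose]
  ext i j
  cases i <;> cases j <;>
    simp [Matrix.fromBlocks, Matrix.neg_apply]

lemma Jmat_mulVec (w : Fin n ⊕ Fin n → ℝ) :
    Jmat n *ᵥ w = Sum.elim (fun j => -w (Sum.inr j)) (fun j => w (Sum.inl j)) := by
  ext i
  cases i <;>
    simp [Jmat, Matrix.mulVec, dotProduct, Fintype.sum_sum_type, Matrix.fromBlocks,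
      Matrix.one_apply, Finset.sum_ite_eq, Finset.mul_sum]

lemma J_dot_J (w u : Fin n ⊕ Fin n → ℝ) :
    (Jmat n *ᵥ w) ⬝ᵥ (Jmat n *ᵥ u) = w ⬝ᵥ u := by
  simp [Jmat_mulVec, dotProduct, Fintype.sum_sum_type]
  exact add_comm _ _

lemma J_skew (w u : Fin n ⊕ Fin n → ℝ) :
    (Jmat n *ᵥ w) ⬝ᵥ u = -(w ⬝ᵥ (Jmat n *ᵥ u)) := by
  simp [Jmat_mulVec, dotProduct, Fintype.sum_sum_type]

lemma Jmat_mulVec_eq_zero {w : Fin n ⊕ Fin n → ℝ} (h : Jmat n *ᵥ w = 0) : w = 0 := by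
  rw [Jmat_mulVec] at h
  funext i
  cases i with
  | inl j => exact congrFun h (Sum.inr j)
  | inr j => simpa [neg_eq_zero] using congrFun h (Sum.inl j)

end aux

section main
variable {n m : ℕ}

lemma sum_mulVec'' {κ : Type*} (s : Finset κ) (M : κ → Matrix (Fin n ⊕ Fin n) (Fin n ⊕ Fin n) ℝ)
    (v : Fin n ⊕ Fin n → ℝ) : (∑ k ∈ s, M k) *ᵥ v = ∑ k ∈ s, M k *ᵥ v := by
  ext i
  simp only [Matrix.mulVec, dotProduct, Matrix.sum_apply, Finset.sum_apply,
    Finset.sum_mul]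
  exact Finset.sum_comm

lemma dotProduct_sum'' {κ : Type*} (s : Finset κ) (v : Fin n ⊕ Fin n → ℝ)
    (w : κ → Fin n ⊕ Fin n → ℝ) : v ⬝ᵥ (∑ k ∈ s, w k) = ∑ k ∈ s, v ⬝ᵥ w k := by
  simp only [dotProduct, Finset.sum_apply, Finset.mul_sum]
  exact Finset.sum_comm

lemma JVJ_eq (ξ : Fin n ⊕ Fin n → ℝ) :
    Jmat n * Matrix.vecMulVec ξ ξ * (Jmat n)ᵀ
      = Matrix.vecMulVec (Jmat n *ᵥ ξ) (Jmat n *ᵥ ξ) := by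
  rw [mul_vecMulVec', vecMulVec_mul', Matrix.transpose_transpose]

lemma PhiMat_eq (fk : Fin n → ℂ) :
    PhiMat fk = Matrix.vecMulVec (iotaR fk) (iotaR fk)
      + Matrix.vecMulVec (Jmat n *ᵥ iotaR fk) (Jmat n *ᵥ iotaR fk) := by
  rw [PhiMat, JVJ_eq]

lemma PhiMat_transpose (fk : Fin n → ℂ) : (PhiMat fk)ᵀ = PhiMat fk := by
  rw [PhiMat_eq, Matrix.transpose_add, vecMulVec_transpose', vecMulVec_transpose']

lemma PhiMat_dot_J (fk : Fin n → ℂ) (ξ : Fin n ⊕ Fin n → ℝ) :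
    (PhiMat fk *ᵥ ξ) ⬝ᵥ (Jmat n *ᵥ ξ) = 0 := by
  set φ := iotaR fk
  rw [PhiMat_eq, Matrix.add_mulVec, vecMulVec_mulVec', vecMulVec_mulVec',
    add_dotProduct, smul_dotProduct, smul_dotProduct]
  have h1 : (Jmat n *ᵥ φ) ⬝ᵥ ξ = -(φ ⬝ᵥ (Jmat n *ᵥ ξ)) := J_skew φ ξ
  have h2 : (Jmat n *ᵥ φ) ⬝ᵥ (Jmat n *ᵥ ξ) = φ ⬝ᵥ ξ := J_dot_J φ ξ
  rw [h1, h2]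
  simp only [smul_eq_mul]
  ring

lemma Rmat_eq (f : Fin m → Fin n → ℂ) (ξ : Fin n ⊕ Fin n → ℝ) :
    Rmat f ξ = ∑ k, Matrix.vecMulVec (PhiMat (f k) *ᵥ ξ) (PhiMat (f k) *ᵥ ξ) := by
  refine Finset.sum_congr rfl fun k _ => ?_
  rw [mul_vecMulVec', vecMulVec_mul', PhiMat_transpose]

lemma Rmat_transpose (f : Fin m → Fin n → ℂ) (ξ : Fin n ⊕ Fin n → ℝ) :
    (Rmat f ξ)ᵀ = Rmat f ξ := by
  rw [Rmat_eq, Matrix.transpose_sum]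
  exact Finset.sum_congr rfl fun k _ => vecMulVec_transpose' _ _

lemma Rmat_mulVec (f : Fin m → Fin n → ℂ) (ξ v : Fin n ⊕ Fin n → ℝ) :
    Rmat f ξ *ᵥ v = ∑ k, ((PhiMat (f k) *ᵥ ξ) ⬝ᵥ v) • (PhiMat (f k) *ᵥ ξ) := by
  rw [Rmat_eq, sum_mulVec'' _ _ _]
  exact Finset.sum_congr rfl fun k _ => vecMulVec_mulVec' _ _ _

lemma Rmat_quad (f : Fin m → Fin n → ℂ) (ξ v : Fin n ⊕ Fin n → ℝ) :
    v ⬝ᵥ (Rmat f ξ *ᵥ v) = ∑ k, ((PhiMat (f k) *ᵥ ξ) ⬝ᵥ v) ^ 2 := by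
  rw [Rmat_mulVec, dotProduct_sum'' _ _ _]
  refine Finset.sum_congr rfl fun k _ => ?_
  rw [dotProduct_smul, smul_eq_mul, dotProduct_comm, sq]

lemma Rmat_mulVec_J (f : Fin m → Fin n → ℂ) (ξ : Fin n ⊕ Fin n → ℝ) :
    Rmat f ξ *ᵥ (Jmat n *ᵥ ξ) = 0 := by
  rw [Rmat_mulVec]
  refine Finset.sum_eq_zero fun k _ => ?_
  rw [PhiMat_dot_J, zero_smul]

end main

section main2
variable {n m : ℕ}

lemma sumsq_eq (ξ : Fin n ⊕ Fin n → ℝ) : (∑ i, ξ i ^ 2) = ξ ⬝ᵥ ξ := by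
  simp [dotProduct, sq]

lemma dot_self_nonneg (ξ : Fin n ⊕ Fin n → ℝ) : 0 ≤ ξ ⬝ᵥ ξ :=
  Finset.sum_nonneg fun i _ => mul_self_nonneg _

lemma D_quad (f : Fin m → Fin n → ℂ) (a : ℝ) (ξ v : Fin n ⊕ Fin n → ℝ) :
    v ⬝ᵥ ((Rmat f ξ - a • ((∑ i, ξ i ^ 2) • (1 : Matrix (Fin n ⊕ Fin n) (Fin n ⊕ Fin n) ℝ)
        - Jmat n * Matrix.vecMulVec ξ ξ * (Jmat n)ᵀ)) *ᵥ v)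
      = (∑ k, ((PhiMat (f k) *ᵥ ξ) ⬝ᵥ v) ^ 2)
        - a * ((ξ ⬝ᵥ ξ) * (v ⬝ᵥ v) - ((Jmat n *ᵥ ξ) ⬝ᵥ v) ^ 2) := by
  rw [Matrix.sub_mulVec, dotProduct_sub, Rmat_quad]
  congr 1
  rw [Matrix.smul_mulVec, dotProduct_smul, smul_eq_mul]
  congr 1
  rw [JVJ_eq, Matrix.sub_mulVec, Matrix.smul_mulVec, Matrix.one_mulVec,
    vecMulVec_mulVec', dotProduct_sub, dotProduct_smul, dotProduct_smul,
    smul_eq_mul, smul_eq_mul, sumsq_eq, dotProduct_comm v (Jmat n *ᵥ ξ), sq]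

lemma D_herm (f : Fin m → Fin n → ℂ) (a : ℝ) (ξ : Fin n ⊕ Fin n → ℝ) :
    (Rmat f ξ - a • ((∑ i, ξ i ^ 2) • (1 : Matrix (Fin n ⊕ Fin n) (Fin n ⊕ Fin n) ℝ)
        - Jmat n * Matrix.vecMulVec ξ ξ * (Jmat n)ᵀ)).IsHermitian := by
  rw [Matrix.IsHermitian, Matrix.conjTranspose_eq_transpose_of_trivial, Matrix.transpose_sub,
    Rmat_transpose, Matrix.transpose_smul, Matrix.transpose_sub, Matrix.transpose_smul,
    Matrix.transpose_one, JVJ_eq, vecMulVec_transpose']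

lemma rank_nullity' (A : Matrix (Fin n ⊕ Fin n) (Fin n ⊕ Fin n) ℝ) :
    A.rank + Module.finrank ℝ (LinearMap.ker A.mulVecLin) = n + n := by
  have h := LinearMap.finrank_range_add_finrank_ker A.mulVecLin
  rw [Module.finrank_pi, Fintype.card_sum, Fintype.card_fin] at h
  rw [Matrix.rank]
  exact h

lemma pos_of_ne_zero' {ξ : Fin n ⊕ Fin n → ℝ} (hξ : ξ ≠ 0) : 0 < ξ ⬝ᵥ ξ :=
  lt_of_le_of_ne (dot_self_nonneg ξ) fun h => hξ (dotProduct_self_eq_zero.mp h.symm)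

lemma n_pos_of_ne_zero {ξ : Fin n ⊕ Fin n → ℝ} (hξ : ξ ≠ 0) : 0 < n := by
  rcases Nat.eq_zero_or_pos n with h | h
  · subst h
    exact absurd (funext fun i => i.elim (fun j => j.elim0) (fun j => j.elim0)) hξ
  · exact h

end main2

section thm
variable {n m : ℕ}

lemma contDot (M : Matrix (Fin n ⊕ Fin n) (Fin n ⊕ Fin n) ℝ) :
    Continuous fun p : (Fin n ⊕ Fin n → ℝ) × (Fin n ⊕ Fin n → ℝ) => (M *ᵥ p.1) ⬝ᵥ p.2 := by
  show Continuous fun p : (Fin n ⊕ Fin n → ℝ) × (Fin n ⊕ Fin n → ℝ) =>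
    ∑ i, (∑ j, M i j * p.1 j) * p.2 i
  refine continuous_finset_sum _ fun i _ => ?_
  exact ((continuous_finset_sum _ fun j _ =>
    (continuous_const.mul ((continuous_apply j).comp continuous_fst)))).mul
    ((continuous_apply i).comp continuous_snd)

lemma dir1 (f : Fin m → Fin n → ℂ)
    (hrank : ∀ ξ : Fin n ⊕ Fin n → ℝ, ξ ≠ 0 → (Rmat f ξ).rank = 2 * n - 1) :
    ∃ a₀ : ℝ, 0 < a₀ ∧ ∀ ξ : Fin n ⊕ Fin n → ℝ,
      (Rmat f ξ - a₀ • ((∑ i, ξ i ^ 2) • (1 : Matrix (Fin n ⊕ Fin n) (Fin n ⊕ Fin n) ℝ)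
          - Jmat n * Matrix.vecMulVec ξ ξ * (Jmat n)ᵀ)).PosSemidef := by
  classical
  set h : (Fin n ⊕ Fin n → ℝ) × (Fin n ⊕ Fin n → ℝ) → ℝ :=
    fun p => ∑ k, ((PhiMat (f k) *ᵥ p.1) ⬝ᵥ p.2) ^ 2 with hhdef
  set K : Set ((Fin n ⊕ Fin n → ℝ) × (Fin n ⊕ Fin n → ℝ)) :=
    {p | p.1 ⬝ᵥ p.1 = 1 ∧ p.2 ⬝ᵥ p.2 = 1 ∧ (Jmat n *ᵥ p.1) ⬝ᵥ p.2 = 0} with hKdef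
  have hcont : Continuous h := by
    apply continuous_finset_sum
    intro k _
    exact (contDot (PhiMat (f k))).pow 2
  have hdd : Continuous fun p : (Fin n ⊕ Fin n → ℝ) × (Fin n ⊕ Fin n → ℝ) => p.1 ⬝ᵥ p.2 := by
    have := contDot (n := n) 1
    simpa [Matrix.one_mulVec] using this
  have hKclosed : IsClosed K := by
    have h1 : IsClosed {p : (Fin n ⊕ Fin n → ℝ) × (Fin n ⊕ Fin n → ℝ) | p.1 ⬝ᵥ p.1 = 1} :=
      isClosed_eq (hdd.comp (continuous_fst.prodMk continuous_fst)) continuous_const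
    have h2 : IsClosed {p : (Fin n ⊕ Fin n → ℝ) × (Fin n ⊕ Fin n → ℝ) | p.2 ⬝ᵥ p.2 = 1} :=
      isClosed_eq (hdd.comp (continuous_snd.prodMk continuous_snd)) continuous_const
    have h3 : IsClosed {p : (Fin n ⊕ Fin n → ℝ) × (Fin n ⊕ Fin n → ℝ) |
        (Jmat n *ᵥ p.1) ⬝ᵥ p.2 = 0} := isClosed_eq (contDot (Jmat n)) continuous_const
    have : K = {p | p.1 ⬝ᵥ p.1 = 1} ∩ ({p | p.2 ⬝ᵥ p.2 = 1} ∩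
        {p | (Jmat n *ᵥ p.1) ⬝ᵥ p.2 = 0}) := by
      ext p; simp [hKdef, Set.mem_inter_iff, and_assoc]
    rw [this]
    exact h1.inter (h2.inter h3)
  have habs : ∀ w : Fin n ⊕ Fin n → ℝ, w ⬝ᵥ w = 1 → ‖w‖ ≤ 1 := by
    intro w hw
    rw [pi_norm_le_iff_of_nonneg zero_le_one]
    intro i
    rw [Real.norm_eq_abs, abs_le_one_iff_mul_self_le_one]
    have : w i * w i ≤ w ⬝ᵥ w := by
      rw [dotProduct]
      exact Finset.single_le_sum (f := fun j => w j * w j)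
        (fun j _ => mul_self_nonneg _) (Finset.mem_univ i)
    nlinarith [this, hw]
  have hKbdd : Bornology.IsBounded K := by
    apply Bornology.IsBounded.subset (Metric.isBounded_closedBall (x := 0) (r := 1))
    intro p hp
    rw [Metric.mem_closedBall, dist_zero_right, Prod.norm_def]
    exact max_le (habs _ hp.1) (habs _ hp.2.1)
  have hKcpt : IsCompact K := Metric.isCompact_of_isClosed_isBounded hKclosed hKbdd
  obtain ⟨a, ha, hKmin⟩ : ∃ a : ℝ, 0 < a ∧ ∀ p ∈ K, a ≤ h p := by
    rcases K.eq_empty_or_nonempty with hKe | hne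
    · exact ⟨1, one_pos, by simp [hKe]⟩
    · obtain ⟨p₀, hp₀K, hmin⟩ := hKcpt.exists_isMinOn hne hcont.continuousOn
      refine ⟨h p₀, ?_, fun p hp => isMinOn_iff.mp hmin p hp⟩
      obtain ⟨hξ1, hv1, hperp⟩ := hp₀K
      have h0 : 0 ≤ h p₀ := Finset.sum_nonneg fun _ _ => sq_nonneg _
      rcases h0.lt_or_eq with hlt | heq
      · exact hlt
      exfalso
      have hz : ∀ k, (PhiMat (f k) *ᵥ p₀.1) ⬝ᵥ p₀.2 = 0 := by
        intro k
        have := (Finset.sum_eq_zero_iff_of_nonneg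
          (fun (k : Fin m) _ => sq_nonneg ((PhiMat (f k) *ᵥ p₀.1) ⬝ᵥ p₀.2))).mp heq.symm
        exact pow_eq_zero_iff (by norm_num) |>.mp (this k (Finset.mem_univ k))
      have hRv : Rmat f p₀.1 *ᵥ p₀.2 = 0 := by
        rw [Rmat_mulVec]
        exact Finset.sum_eq_zero fun k _ => by rw [hz k, zero_smul]
      have hξ0 : p₀.1 ≠ 0 := by
        intro hc
        rw [hc] at hξ1
        simp [zero_dotProduct] at hξ1
      have hJne : Jmat n *ᵥ p₀.1 ≠ 0 := fun hc => hξ0 (Jmat_mulVec_eq_zero hc)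
      have hn := n_pos_of_ne_zero hξ0
      have hrn := rank_nullity' (Rmat f p₀.1)
      rw [hrank p₀.1 hξ0] at hrn
      have hker1 : Module.finrank ℝ (LinearMap.ker (Rmat f p₀.1).mulVecLin) = 1 := by omega
      have hsub : Submodule.span ℝ {Jmat n *ᵥ p₀.1} ≤ LinearMap.ker (Rmat f p₀.1).mulVecLin := by
        rw [Submodule.span_singleton_le_iff_mem, LinearMap.mem_ker, Matrix.mulVecLin_apply]
        exact Rmat_mulVec_J f p₀.1
      have heqker : Submodule.span ℝ {Jmat n *ᵥ p₀.1} = LinearMap.ker (Rmat f p₀.1).mulVecLin :=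
        Submodule.eq_of_le_of_finrank_le hsub
          (by rw [hker1, finrank_span_singleton hJne])
      have hvmem : p₀.2 ∈ Submodule.span ℝ {Jmat n *ᵥ p₀.1} := by
        rw [heqker, LinearMap.mem_ker, Matrix.mulVecLin_apply]
        exact hRv
      obtain ⟨c, hc⟩ := Submodule.mem_span_singleton.mp hvmem
      have hJJ1 : (Jmat n *ᵥ p₀.1) ⬝ᵥ (Jmat n *ᵥ p₀.1) = 1 := by
        rw [J_dot_J]; exact hξ1
      have hc0 : c = 0 := by
        have := hperp
        rw [← hc, dotProduct_smul, hJJ1, smul_eq_mul, mul_one] at this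
        exact this
      rw [hc0, zero_smul] at hc
      rw [← hc] at hv1
      simp [dotProduct_zero] at hv1
  refine ⟨a, ha, fun ξ => .of_dotProduct_mulVec_nonneg (D_herm f a ξ) fun v => ?_⟩
  rw [star_trivial, D_quad, sub_nonneg]
  by_cases hξ0 : ξ = 0
  · subst hξ0
    simp [Matrix.mulVec_zero, zero_dotProduct, dotProduct_zero]
  have hs : 0 < ξ ⬝ᵥ ξ := pos_of_ne_zero' hξ0
  set s : ℝ := ξ ⬝ᵥ ξ with hsdef
  set Jξ : Fin n ⊕ Fin n → ℝ := Jmat n *ᵥ ξ with hJdef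
  set t : ℝ := Jξ ⬝ᵥ v with htdef
  have hJJ : Jξ ⬝ᵥ Jξ = s := J_dot_J ξ ξ
  set w : Fin n ⊕ Fin n → ℝ := v - (t / s) • Jξ with hwdef
  have hcomm : v ⬝ᵥ Jξ = t := dotProduct_comm v Jξ
  have hgw : ∀ k, (PhiMat (f k) *ᵥ ξ) ⬝ᵥ w = (PhiMat (f k) *ᵥ ξ) ⬝ᵥ v := by
    intro k
    rw [hwdef, dotProduct_sub, dotProduct_smul, hJdef, PhiMat_dot_J]
    simp
  have hww : s * (w ⬝ᵥ w) = s * (v ⬝ᵥ v) - t ^ 2 := by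
    have : w ⬝ᵥ w = v ⬝ᵥ v - 2 * (t / s) * t + (t / s) ^ 2 * s := by
      simp only [hwdef, sub_dotProduct, dotProduct_sub,
        smul_dotProduct, dotProduct_smul, smul_eq_mul, hcomm, hJJ]
      ring
    rw [this]
    field_simp
    ring
  have hQ : (∑ k, ((PhiMat (f k) *ᵥ ξ) ⬝ᵥ v) ^ 2) = ∑ k, ((PhiMat (f k) *ᵥ ξ) ⬝ᵥ w) ^ 2 :=
    Finset.sum_congr rfl fun k _ => by rw [hgw k]
  rw [hQ, ← hww]
  by_cases hw0 : w = 0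
  · rw [hw0]
    simp [dotProduct_zero]
  have hr : 0 < w ⬝ᵥ w := pos_of_ne_zero' hw0
  set r : ℝ := w ⬝ᵥ w with hrdef
  set c : ℝ := (Real.sqrt s)⁻¹ with hcdef
  set d : ℝ := (Real.sqrt r)⁻¹ with hddef
  have hsqs : Real.sqrt s * Real.sqrt s = s := Real.mul_self_sqrt hs.le
  have hsqr : Real.sqrt r * Real.sqrt r = r := Real.mul_self_sqrt hr.le
  have hsne : Real.sqrt s ≠ 0 := by positivity
  have hrne : Real.sqrt r ≠ 0 := by positivity
  have hc1 : c * c * s = 1 := by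
    rw [hcdef, ← mul_inv, hsqs]
    exact inv_mul_cancel₀ hs.ne'
  have hd1 : d * d * r = 1 := by
    rw [hddef, ← mul_inv, hsqr]
    exact inv_mul_cancel₀ hr.ne'
  have hJw : Jξ ⬝ᵥ w = 0 := by
    rw [hwdef, dotProduct_sub, dotProduct_smul, hJJ, smul_eq_mul]
    field_simp
    exact sub_self _
  have hpK : ((c • ξ, d • w) : _ × _) ∈ K := by
    refine ⟨?_, ?_, ?_⟩
    · show (c • ξ) ⬝ᵥ (c • ξ) = 1
      rw [smul_dotProduct, dotProduct_smul, smul_eq_mul, smul_eq_mul, ← hsdef]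
      rw [show c * (c * s) = c * c * s by ring, hc1]
    · show (d • w) ⬝ᵥ (d • w) = 1
      rw [smul_dotProduct, dotProduct_smul, smul_eq_mul, smul_eq_mul, ← hrdef]
      rw [show d * (d * r) = d * d * r by ring, hd1]
    · show (Jmat n *ᵥ (c • ξ)) ⬝ᵥ (d • w) = 0
      rw [Matrix.mulVec_smul, smul_dotProduct, dotProduct_smul, ← hJdef, hJw]
      simp
  have hmin := hKmin _ hpK
  have hhp : h (c • ξ, d • w) = c * c * (d * d * (∑ k, ((PhiMat (f k) *ᵥ ξ) ⬝ᵥ w) ^ 2)) := by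
    rw [hhdef]
    simp only [Matrix.mulVec_smul, smul_dotProduct, dotProduct_smul,
      smul_eq_mul, Finset.mul_sum]
    exact Finset.sum_congr rfl fun k _ => by ring
  rw [hhp] at hmin
  set Q : ℝ := ∑ k, ((PhiMat (f k) *ᵥ ξ) ⬝ᵥ w) ^ 2 with hQdef
  have hQnn : 0 ≤ Q := Finset.sum_nonneg fun _ _ => sq_nonneg _
  have h4 : (c * c * (d * d * Q)) * (s * r) = Q := by
    linear_combination (Q * (d * d * r)) * hc1 + Q * hd1
  have h5 : a * (s * r) ≤ (c * c * (d * d * Q)) * (s * r) :=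
    mul_le_mul_of_nonneg_right hmin (by positivity)
  rw [h4] at h5
  calc a * (s * (w ⬝ᵥ w)) = a * (s * r) := by rw [← hrdef]
    _ ≤ Q := h5

end thm

section dir2sec
variable {n m : ℕ}

lemma dir2 (f : Fin m → Fin n → ℂ) (a : ℝ) (ha : 0 < a)
    (hA : ∀ ξ : Fin n ⊕ Fin n → ℝ,
      (Rmat f ξ - a • ((∑ i, ξ i ^ 2) • (1 : Matrix (Fin n ⊕ Fin n) (Fin n ⊕ Fin n) ℝ)
          - Jmat n * Matrix.vecMulVec ξ ξ * (Jmat n)ᵀ)).PosSemidef)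
    (ξ : Fin n ⊕ Fin n → ℝ) (hξ : ξ ≠ 0) : (Rmat f ξ).rank = 2 * n - 1 := by
  have hs : 0 < ξ ⬝ᵥ ξ := pos_of_ne_zero' hξ
  set s : ℝ := ξ ⬝ᵥ ξ with hsdef
  set Jξ : Fin n ⊕ Fin n → ℝ := Jmat n *ᵥ ξ with hJdef
  have hJJ : Jξ ⬝ᵥ Jξ = s := J_dot_J ξ ξ
  have hJne : Jξ ≠ 0 := fun h => hξ (Jmat_mulVec_eq_zero h)
  have hker : LinearMap.ker (Rmat f ξ).mulVecLin = Submodule.span ℝ {Jξ} := by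
    apply le_antisymm
    · intro v hv
      have hv0 : Rmat f ξ *ᵥ v = 0 := by
        rw [← Matrix.mulVecLin_apply]; exact hv
      have hq : (∑ k, ((PhiMat (f k) *ᵥ ξ) ⬝ᵥ v) ^ 2) = 0 := by
        rw [← Rmat_quad, hv0, dotProduct_zero]
      have hpos := (hA ξ).dotProduct_mulVec_nonneg v
      rw [star_trivial, D_quad, hq] at hpos
      set t : ℝ := Jξ ⬝ᵥ v with htdef
      have hle : s * (v ⬝ᵥ v) - t ^ 2 ≤ 0 := by nlinarith
      set u : Fin n ⊕ Fin n → ℝ := s • v - t • Jξ with hudef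
      have huu : u ⬝ᵥ u = s * (s * (v ⬝ᵥ v) - t ^ 2) := by
        have hcomm : v ⬝ᵥ Jξ = t := dotProduct_comm v Jξ
        simp only [hudef, sub_dotProduct, dotProduct_sub,
          smul_dotProduct, dotProduct_smul, smul_eq_mul, hcomm, hJJ]
        ring
      have hu0 : u = 0 := by
        rw [← dotProduct_self_eq_zero]
        have h1 : 0 ≤ u ⬝ᵥ u := dot_self_nonneg u
        nlinarith
      have hsv : s • v = t • Jξ := by
        rwa [hudef, sub_eq_zero] at hu0
      refine Submodule.mem_span_singleton.mpr ⟨s⁻¹ * t, ?_⟩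
      have := congrArg (fun z => s⁻¹ • z) hsv
      simpa [smul_smul, inv_mul_cancel₀ hs.ne', one_smul] using this.symm
    · rw [Submodule.span_singleton_le_iff_mem]
      rw [LinearMap.mem_ker, Matrix.mulVecLin_apply, hJdef]
      exact Rmat_mulVec_J f ξ
  have hrn := rank_nullity' (Rmat f ξ)
  rw [hker, finrank_span_singleton hJne] at hrn
  have hn := n_pos_of_ne_zero hξ
  omega

end dir2sec

/-- For a frame `F` of `ℂⁿ`, the following are equivalent:
(i) `rank R(ξ) = 2n − 1` for every nonzero `ξ ∈ ℝ²ⁿ`;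
(ii) there is `a₀ > 0` with `R(ξ) ⪰ a₀ (‖ξ‖² I − Jξξᵀ Jᵀ)` for every `ξ ∈ ℝ²ⁿ`. -/
theorem stmt2 (n m : ℕ) (f : Fin m → Fin n → ℂ)
    (hspan : Submodule.span ℂ (Set.range f) = ⊤) :
    (∀ ξ : Fin n ⊕ Fin n → ℝ, ξ ≠ 0 → (Rmat f ξ).rank = 2 * n - 1) ↔
      ∃ a₀ : ℝ, 0 < a₀ ∧ ∀ ξ : Fin n ⊕ Fin n → ℝ,
        (Rmat f ξ - a₀ • ((∑ i, ξ i ^ 2) • (1 : Matrix (Fin n ⊕ Fin n) (Fin n ⊕ Fin n) ℝ)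
            - Jmat n * Matrix.vecMulVec ξ ξ * (Jmat n)ᵀ)).PosSemidef := by
  constructor
  · intro hrank
    exact dir1 f hrank
  · rintro ⟨a, ha, hA⟩ ξ hξ
    exact dir2 f a ha hA ξ hξ
end
end

section
/- The following are equivalent: (i) the restriction of α to ℝⁿ is injective up to a sign, i.e. for u, v ∈ ℝⁿ, α(u) = α(v) implies v = u or v = −u; (ii) there exists a constant a₀ > 0 such that for all u, v ∈ ℝⁿ, Σ_{k=1}^m ( vᵀ Φ'_k u )² ≥ a₀ ‖u‖²‖v‖². -/
open scoped BigOperators ComplexConjugate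
open Matrix

noncomputable section

/-- The real matrix `Φ'ₖ = gₖgₖᵀ + hₖhₖᵀ` where `fₖ = gₖ + i hₖ`. -/
def PhiReal {n : ℕ} (fk : Fin n → ℂ) : Matrix (Fin n) (Fin n) ℝ :=
  Matrix.vecMulVec (fun j => (fk j).re) (fun j => (fk j).re)
    + Matrix.vecMulVec (fun j => (fk j).im) (fun j => (fk j).im)

/-- Embedding of `ℝⁿ` into `ℂⁿ`. -/
def toC {n : ℕ} (u : Fin n → ℝ) : Fin n → ℂ := fun j => (u j : ℂ)

private lemma dot_vmv {n : ℕ} (x y u v : Fin n → ℝ) :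
    v ⬝ᵥ (Matrix.vecMulVec x y).mulVec u = (v ⬝ᵥ x) * (y ⬝ᵥ u) := by
  simp only [Matrix.mulVec, Matrix.vecMulVec_apply, dotProduct]
  rw [Finset.sum_mul]
  refine Finset.sum_congr rfl fun i _ => ?_
  rw [Finset.mul_sum, Finset.mul_sum]
  exact Finset.sum_congr rfl fun j _ => by ring

private lemma dot_phi {n : ℕ} (fk : Fin n → ℂ) (u v : Fin n → ℝ) :
    v ⬝ᵥ (PhiReal fk).mulVec u =
      (v ⬝ᵥ fun j => (fk j).re) * (u ⬝ᵥ fun j => (fk j).re)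
      + (v ⬝ᵥ fun j => (fk j).im) * (u ⬝ᵥ fun j => (fk j).im) := by
  rw [PhiReal, Matrix.add_mulVec, dotProduct_add, dot_vmv, dot_vmv,
    dotProduct_comm _ u, dotProduct_comm _ u]

private lemma alpha_real {n : ℕ} (fk : Fin n → ℂ) (u : Fin n → ℝ) :
    Complex.normSq (cip (toC u) fk) =
      (u ⬝ᵥ fun j => (fk j).re)^2 + (u ⬝ᵥ fun j => (fk j).im)^2 := by
  have hre : (cip (toC u) fk).re = u ⬝ᵥ fun j => (fk j).re := by
    simp [cip, toC, dotProduct, Complex.re_sum, Complex.mul_re]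
  have him : (cip (toC u) fk).im = -(u ⬝ᵥ fun j => (fk j).im) := by
    simp [cip, toC, dotProduct, Complex.im_sum, Complex.mul_im, Finset.sum_neg_distrib]
  rw [Complex.normSq_apply, hre, him]
  ring

private lemma alpha_diff {n : ℕ} (fk : Fin n → ℂ) (a b : Fin n → ℝ) :
    Complex.normSq (cip (toC a) fk) - Complex.normSq (cip (toC b) fk)
      = (a + b) ⬝ᵥ (PhiReal fk).mulVec (a - b) := by
  rw [alpha_real, alpha_real, dot_phi, add_dotProduct, add_dotProduct,
    sub_dotProduct, sub_dotProduct]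
  ring

private lemma sumsq_eq_zero {n : ℕ} {u : Fin n → ℝ} (h : ∑ j, u j ^ 2 = 0) : u = 0 := by
  funext j
  have := (Finset.sum_eq_zero_iff_of_nonneg (fun i _ => sq_nonneg (u i))).1 h j (Finset.mem_univ j)
  exact pow_eq_zero_iff two_ne_zero |>.1 this

private lemma contQ {n m : ℕ} (f : Fin m → Fin n → ℂ) :
    Continuous fun p : (Fin n → ℝ) × (Fin n → ℝ) =>
      ∑ k, (p.2 ⬝ᵥ (PhiReal (f k)).mulVec p.1) ^ 2 := by
  apply continuous_finset_sum
  intro k _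
  apply Continuous.pow
  simp only [dotProduct, Matrix.mulVec]
  apply continuous_finset_sum
  intro i _
  refine ((continuous_apply i).comp continuous_snd).mul ?_
  apply continuous_finset_sum
  intro j _
  exact continuous_const.mul ((continuous_apply j).comp continuous_fst)

private lemma sphere_compact (n : ℕ) :
    IsCompact {u : Fin n → ℝ | ∑ j, u j ^ 2 = 1} := by
  rw [Metric.isCompact_iff_isClosed_bounded]
  constructor
  · have : Continuous fun u : Fin n → ℝ => ∑ j, u j ^ 2 :=
      continuous_finset_sum _ fun j _ => (continuous_apply j).pow 2
    exact isClosed_eq this continuous_const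
  · apply Bornology.IsBounded.subset (Metric.isBounded_closedBall (x := (0 : Fin n → ℝ)) (r := 1))
    intro u hu
    simp only [Metric.mem_closedBall, dist_zero_right]
    rw [pi_norm_le_iff_of_nonneg zero_le_one]
    intro i
    rw [Real.norm_eq_abs, ← sq_le_one_iff_abs_le_one, ← hu]
    exact Finset.single_le_sum (fun j _ => sq_nonneg (u j)) (Finset.mem_univ i)

/-- The restriction of `α` to `ℝⁿ` is injective up to a sign iff there is
`a₀ > 0` with `∑ₖ (vᵀ Φ'ₖ u)² ≥ a₀ ‖u‖²‖v‖²` for all `u, v ∈ ℝⁿ`. -/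
theorem stmt3 (n m : ℕ) (f : Fin m → Fin n → ℂ)
    (hspan : Submodule.span ℂ (Set.range f) = ⊤) :
    (∀ u v : Fin n → ℝ, alphaMap f (toC u) = alphaMap f (toC v) → v = u ∨ v = -u) ↔
      ∃ a₀ : ℝ, 0 < a₀ ∧ ∀ u v : Fin n → ℝ,
        a₀ * ((∑ j, u j ^ 2) * (∑ j, v j ^ 2))
          ≤ ∑ k, (v ⬝ᵥ (PhiReal (f k)).mulVec u) ^ 2 := by
  constructor
  · intro hinj
    -- key: Q(u,v) = 0 → u = 0 ∨ v = 0
    have key : ∀ u v : Fin n → ℝ,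
        (∑ k, (v ⬝ᵥ (PhiReal (f k)).mulVec u) ^ 2) = 0 → u = 0 ∨ v = 0 := by
      intro u v hQ
      have hterm : ∀ k, v ⬝ᵥ (PhiReal (f k)).mulVec u = 0 := fun k =>
        pow_eq_zero_iff two_ne_zero |>.1
          ((Finset.sum_eq_zero_iff_of_nonneg (fun i _ => sq_nonneg _)).1 hQ k (Finset.mem_univ k))
      set a : Fin n → ℝ := fun j => (u j + v j) / 2 with ha
      set b : Fin n → ℝ := fun j => (v j - u j) / 2 with hb
      have hab1 : a + b = v := funext fun j => by simp [ha, hb]; ring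
      have hab2 : a - b = u := funext fun j => by simp [ha, hb]; ring
      have halpha : alphaMap f (toC a) = alphaMap f (toC b) := by
        funext k
        have h1 := alpha_diff (f k) a b
        rw [hab1, hab2, hterm k] at h1
        have := sub_eq_zero.mp h1
        simpa [alphaMap] using this
      rcases hinj a b halpha with h | h
      · left; rw [← hab2, h, sub_self]
      · right; rw [← hab1, h, add_neg_cancel]
    rcases Nat.eq_zero_or_pos n with hn | hn
    · refine ⟨1, one_pos, fun u v => ?_⟩
      subst hn
      simp only [Finset.univ_eq_empty, Finset.sum_empty, mul_zero, one_mul]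
      exact Finset.sum_nonneg fun k _ => sq_nonneg _
    · -- compactness argument
      set S : Set (Fin n → ℝ) := {u | ∑ j, u j ^ 2 = 1} with hS
      set K : Set ((Fin n → ℝ) × (Fin n → ℝ)) := S ×ˢ S with hK
      have hKc : IsCompact K := (sphere_compact n).prod (sphere_compact n)
      have e0 : Fin n := ⟨0, hn⟩
      have heS : (Pi.single e0 (1:ℝ)) ∈ S := by
        simp only [hS, Set.mem_setOf_eq]
        rw [Finset.sum_eq_single e0]
        · simp
        · intro j _ hj; simp [Pi.single_apply, hj]
        · intro h; exact absurd (Finset.mem_univ e0) h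
      have hKne : K.Nonempty := ⟨(Pi.single e0 1, Pi.single e0 1), heS, heS⟩
      obtain ⟨p, hpK, hmin⟩ := hKc.exists_isMinOn hKne (contQ f).continuousOn
      set a₀ : ℝ := ∑ k, (p.2 ⬝ᵥ (PhiReal (f k)).mulVec p.1) ^ 2 with ha₀
      have ha₀nonneg : 0 ≤ a₀ := Finset.sum_nonneg fun k _ => sq_nonneg _
      have ha₀pos : 0 < a₀ := by
        rcases lt_or_eq_of_le ha₀nonneg with h | h
        · exact h
        · exfalso
          rcases key p.1 p.2 h.symm with h1 | h1
          · have := hpK.1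
            rw [hS, Set.mem_setOf_eq, h1] at this
            simp at this
          · have := hpK.2
            rw [hS, Set.mem_setOf_eq, h1] at this
            simp at this
      refine ⟨a₀, ha₀pos, fun u v => ?_⟩
      by_cases hsu : (∑ j, u j ^ 2) = 0
      · rw [hsu, zero_mul, mul_zero]
        exact Finset.sum_nonneg fun k _ => sq_nonneg _
      by_cases hsv : (∑ j, v j ^ 2) = 0
      · rw [hsv, mul_zero, mul_zero]
        exact Finset.sum_nonneg fun k _ => sq_nonneg _
      have hsu' : 0 < ∑ j, u j ^ 2 :=
        lt_of_le_of_ne (Finset.sum_nonneg fun j _ => sq_nonneg _) (Ne.symm hsu)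
      have hsv' : 0 < ∑ j, v j ^ 2 :=
        lt_of_le_of_ne (Finset.sum_nonneg fun j _ => sq_nonneg _) (Ne.symm hsv)
      set c : ℝ := (Real.sqrt (∑ j, u j ^ 2))⁻¹ with hc
      set d : ℝ := (Real.sqrt (∑ j, v j ^ 2))⁻¹ with hd
      have hc2 : c ^ 2 = (∑ j, u j ^ 2)⁻¹ := by
        rw [hc, inv_pow, Real.sq_sqrt hsu'.le]
      have hd2 : d ^ 2 = (∑ j, v j ^ 2)⁻¹ := by
        rw [hd, inv_pow, Real.sq_sqrt hsv'.le]
      have hcu : (c • u) ∈ S := by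
        simp only [hS, Set.mem_setOf_eq, Pi.smul_apply, smul_eq_mul, mul_pow,
          ← Finset.mul_sum, hc2]
        exact inv_mul_cancel₀ hsu
      have hdv : (d • v) ∈ S := by
        simp only [hS, Set.mem_setOf_eq, Pi.smul_apply, smul_eq_mul, mul_pow,
          ← Finset.mul_sum, hd2]
        exact inv_mul_cancel₀ hsv
      have hmem : ((c • u, d • v) : (Fin n → ℝ) × (Fin n → ℝ)) ∈ K := ⟨hcu, hdv⟩
      have hle := hmin hmem
      have hQscale : (∑ k, ((d • v) ⬝ᵥ (PhiReal (f k)).mulVec (c • u)) ^ 2)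
          = (∑ j, u j ^ 2)⁻¹ * (∑ j, v j ^ 2)⁻¹ *
            ∑ k, (v ⬝ᵥ (PhiReal (f k)).mulVec u) ^ 2 := by
        rw [Finset.mul_sum]
        refine Finset.sum_congr rfl fun k _ => ?_
        rw [Matrix.mulVec_smul, dotProduct_smul, smul_dotProduct,
          smul_eq_mul, smul_eq_mul]
        rw [mul_pow, mul_pow, hc2, hd2]
        ring
      have hle' : a₀ ≤ (∑ j, u j ^ 2)⁻¹ * (∑ j, v j ^ 2)⁻¹ *
          ∑ k, (v ⬝ᵥ (PhiReal (f k)).mulVec u) ^ 2 := by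
        rw [← hQscale]; exact hle
      have hle2 := mul_le_mul_of_nonneg_left hle' (mul_pos hsu' hsv').le
      calc a₀ * ((∑ j, u j ^ 2) * (∑ j, v j ^ 2))
          = (∑ j, u j ^ 2) * (∑ j, v j ^ 2) * a₀ := by ring
        _ ≤ (∑ j, u j ^ 2) * (∑ j, v j ^ 2) *
              ((∑ j, u j ^ 2)⁻¹ * (∑ j, v j ^ 2)⁻¹ *
                ∑ k, (v ⬝ᵥ (PhiReal (f k)).mulVec u) ^ 2) := hle2
        _ = ∑ k, (v ⬝ᵥ (PhiReal (f k)).mulVec u) ^ 2 := by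
            field_simp
  · rintro ⟨a₀, ha₀, hbd⟩ u v h
    have hterm : ∀ k, (u + v) ⬝ᵥ (PhiReal (f k)).mulVec (u - v) = 0 := by
      intro k
      rw [← alpha_diff]
      have : alphaMap f (toC u) k = alphaMap f (toC v) k := by rw [h]
      simpa [alphaMap] using sub_eq_zero.mpr this
    have hQ : (∑ k, ((u + v) ⬝ᵥ (PhiReal (f k)).mulVec (u - v)) ^ 2) = 0 := by
      refine Finset.sum_eq_zero fun k _ => ?_
      rw [hterm k]; ring
    have hle := hbd (u - v) (u + v)
    rw [hQ] at hle
    have hnn1 : 0 ≤ ∑ j, (u - v) j ^ 2 := Finset.sum_nonneg fun j _ => sq_nonneg _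
    have hnn2 : 0 ≤ ∑ j, (u + v) j ^ 2 := Finset.sum_nonneg fun j _ => sq_nonneg _
    have hprod : (∑ j, (u - v) j ^ 2) * (∑ j, (u + v) j ^ 2) = 0 := by
      nlinarith
    rcases mul_eq_zero.mp hprod with h0 | h0
    · left
      have := sumsq_eq_zero h0
      have : u - v = 0 := this
      rw [sub_eq_zero] at this
      exact this.symm
    · right
      have h1 : u + v = 0 := sumsq_eq_zero h0
      funext j
      have := congrFun h1 j
      simp only [Pi.add_apply, Pi.zero_apply] at this
      simp [Pi.neg_apply]
      linarith
end
end

section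
/- For nonnegative integers p, q, r, s: (i) if T is a Hermitian n×n matrix with at most p positive and at most q negative eigenvalues, and S is a Hermitian n×n matrix with at most r positive and at most s negative eigenvalues, then T + S has at most p+r positive and at most q+s negative eigenvalues; (ii) conversely, every Hermitian n×n matrix W with at most p+r positive and at most q+s negative eigenvalues can be written as W = T + S with T having at most p positive and at most q negative eigenvalues and S having at most r positive and at most s negative eigenvalues. That is, S^{p,q} + S^{r,s} = S^{p+r,q+s}. -/
open scoped BigOperators ComplexConjugate
open Matrix

noncomputable section

/-- Number of strictly positive eigenvalues (with multiplicity) of a Hermitian matrix. -/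
def posCount {n : ℕ} {𝕜 : Type*} [RCLike 𝕜] {X : Matrix (Fin n) (Fin n) 𝕜}
    (hX : X.IsHermitian) : ℕ :=
  Nat.card {i // 0 < hX.eigenvalues i}

/-- Number of strictly negative eigenvalues (with multiplicity) of a Hermitian matrix. -/
def negCount {n : ℕ} {𝕜 : Type*} [RCLike 𝕜] {X : Matrix (Fin n) (Fin n) 𝕜}
    (hX : X.IsHermitian) : ℕ :=
  Nat.card {i // hX.eigenvalues i < 0}

/-- Nuclear norm of a Hermitian matrix: sum of absolute values of eigenvalues. -/
def nucNorm {n : ℕ} {𝕜 : Type*} [RCLike 𝕜] {X : Matrix (Fin n) (Fin n) 𝕜}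
    (hX : X.IsHermitian) : ℝ :=
  ∑ i, |hX.eigenvalues i|


section Aux
variable {n : ℕ}


def form (X : Matrix (Fin n) (Fin n) ℂ) (x : EuclideanSpace ℂ (Fin n)) : ℝ :=
  (inner ℂ x (Matrix.toEuclideanLin X x) : ℂ).re

lemma form_add (T S : Matrix (Fin n) (Fin n) ℂ) (x : EuclideanSpace ℂ (Fin n)) :
    form (T + S) x = form T x + form S x := by
  simp [form, inner_add_right]

lemma form_eq_sum {X : Matrix (Fin n) (Fin n) ℂ} (hX : X.IsHermitian)
    (B : OrthonormalBasis (Fin n) ℂ (EuclideanSpace ℂ (Fin n))) (d : Fin n → ℝ)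
    (h : ∀ i, Matrix.toEuclideanLin X (B i) = (d i : ℂ) • B i)
    (x : EuclideanSpace ℂ (Fin n)) :
    form X x = ∑ i, d i * ‖B.repr x i‖ ^ 2 := by
  have hsym : (Matrix.toEuclideanLin X).IsSymmetric :=
    (Matrix.isHermitian_iff_isSymmetric).mp hX
  have hrepr : ∀ i, B.repr (Matrix.toEuclideanLin X x) i = (d i : ℂ) * B.repr x i := by
    intro i
    rw [B.repr_apply_apply, B.repr_apply_apply]
    calc inner ℂ (B i) (Matrix.toEuclideanLin X x)
        = inner ℂ (Matrix.toEuclideanLin X (B i)) x := (hsym _ _).symm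
      _ = (inner ℂ ((d i : ℂ) • B i) x : ℂ) := by rw [h]
      _ = (d i : ℂ) * inner ℂ (B i) x := by
          rw [inner_smul_left]; simp
  have key : (inner ℂ x (Matrix.toEuclideanLin X x) : ℂ)
      = ∑ i, (starRingEnd ℂ) (B.repr x i) * ((d i : ℂ) * B.repr x i) := by
    rw [← B.repr.inner_map_map x (Matrix.toEuclideanLin X x)]
    rw [EuclideanSpace.inner_eq_star_dotProduct]
    simp [dotProduct, hrepr, mul_comm]
  rw [form, key, Complex.re_sum]
  congr 1; ext i
  have : (starRingEnd ℂ) (B.repr x i) * ((d i : ℂ) * B.repr x i)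
      = (d i : ℂ) * ((starRingEnd ℂ) (B.repr x i) * B.repr x i) := by ring
  rw [this, Complex.conj_mul', ← Complex.ofReal_pow, ← Complex.ofReal_mul,
    Complex.ofReal_re]

def coordSupp (B : OrthonormalBasis (Fin n) ℂ (EuclideanSpace ℂ (Fin n)))
    (t : Finset (Fin n)) : Submodule ℂ (EuclideanSpace ℂ (Fin n)) where
  carrier := {x | ∀ i ∉ t, B.repr x i = 0}
  add_mem' := by intro a b ha hb i hi; simp [ha i hi, hb i hi]
  zero_mem' := by intro i hi; simp
  smul_mem' := by intro c a ha i hi; simp [ha i hi]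

lemma mem_coordSupp {B : OrthonormalBasis (Fin n) ℂ (EuclideanSpace ℂ (Fin n))}
    {t : Finset (Fin n)} {x : EuclideanSpace ℂ (Fin n)} :
    x ∈ coordSupp B t ↔ ∀ i ∉ t, B.repr x i = 0 := Iff.rfl

lemma coordSupp_eq_span (B : OrthonormalBasis (Fin n) ℂ (EuclideanSpace ℂ (Fin n)))
    (t : Finset (Fin n)) :
    coordSupp B t = Submodule.span ℂ (B '' ↑t) := by
  apply le_antisymm
  · intro x hx
    have hx' : x = ∑ i ∈ t, B.repr x i • B i := by
      have h1 := B.sum_repr x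
      rw [← Finset.sum_subset (Finset.subset_univ t)] at h1
      · exact h1.symm
      · intro i _ hi; rw [hx i hi, zero_smul]
    rw [hx']
    exact Submodule.sum_mem _ fun i hi => Submodule.smul_mem _ _
      (Submodule.subset_span ⟨i, hi, rfl⟩)
  · rw [Submodule.span_le]
    rintro _ ⟨j, hj, rfl⟩ i hi
    rw [B.repr_self]
    have : i ≠ j := fun h => hi (h ▸ hj)
    simp [EuclideanSpace.single_apply, this]

lemma finrank_coordSupp (B : OrthonormalBasis (Fin n) ℂ (EuclideanSpace ℂ (Fin n)))
    (t : Finset (Fin n)) :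
    Module.finrank ℂ (coordSupp B t) = t.card := by
  rw [coordSupp_eq_span]
  have hli : LinearIndependent ℂ (B ∘ (Subtype.val : {i // i ∈ t} → Fin n)) :=
    B.orthonormal.linearIndependent.comp _ Subtype.val_injective
  have hrange : Set.range (B ∘ (Subtype.val : {i // i ∈ t} → Fin n)) = B '' ↑t := by
    rw [Set.range_comp, Subtype.range_coe]
  rw [← hrange, finrank_span_eq_card hli, Fintype.card_coe]


lemma eigen_canonical {X : Matrix (Fin n) (Fin n) ℂ} (hX : X.IsHermitian) (i : Fin n) :
    Matrix.toEuclideanLin X (hX.eigenvectorBasis i)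
      = ((hX.eigenvalues i : ℝ) : ℂ) • hX.eigenvectorBasis i := by
  have h := hX.mulVec_eigenvectorBasis i
  rw [toEuclideanLin_apply]
  have : (WithLp.equiv 2 (Fin n → ℂ)) (hX.eigenvectorBasis i) = ⇑(hX.eigenvectorBasis i) := rfl
  rw [h]
  rw [RCLike.real_smul_eq_coe_smul (K := ℂ)]
  rfl

lemma form_nonpos_on {X : Matrix (Fin n) (Fin n) ℂ} (hX : X.IsHermitian)
    (B : OrthonormalBasis (Fin n) ℂ (EuclideanSpace ℂ (Fin n))) (d : Fin n → ℝ)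
    (h : ∀ i, Matrix.toEuclideanLin X (B i) = (d i : ℂ) • B i)
    (x : EuclideanSpace ℂ (Fin n))
    (hx : x ∈ coordSupp B (Finset.univ.filter fun i => ¬ 0 < d i)) :
    form X x ≤ 0 := by
  rw [form_eq_sum hX B d h]
  apply Finset.sum_nonpos
  intro i _
  by_cases hi : 0 < d i
  · have : B.repr x i = 0 := hx i (by simp [hi])
    simp [this]
  · push_neg at hi
    exact mul_nonpos_of_nonpos_of_nonneg hi (by positivity)

lemma form_nonneg_on {X : Matrix (Fin n) (Fin n) ℂ} (hX : X.IsHermitian)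
    (B : OrthonormalBasis (Fin n) ℂ (EuclideanSpace ℂ (Fin n))) (d : Fin n → ℝ)
    (h : ∀ i, Matrix.toEuclideanLin X (B i) = (d i : ℂ) • B i)
    (x : EuclideanSpace ℂ (Fin n))
    (hx : x ∈ coordSupp B (Finset.univ.filter fun i => ¬ d i < 0)) :
    0 ≤ form X x := by
  rw [form_eq_sum hX B d h]
  apply Finset.sum_nonneg
  intro i _
  by_cases hi : d i < 0
  · have : B.repr x i = 0 := hx i (by simp [hi])
    simp [this]
  · push_neg at hi
    positivity

lemma form_pos_on {X : Matrix (Fin n) (Fin n) ℂ} (hX : X.IsHermitian)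
    (B : OrthonormalBasis (Fin n) ℂ (EuclideanSpace ℂ (Fin n))) (d : Fin n → ℝ)
    (h : ∀ i, Matrix.toEuclideanLin X (B i) = (d i : ℂ) • B i)
    (x : EuclideanSpace ℂ (Fin n))
    (hx : x ∈ coordSupp B (Finset.univ.filter fun i => 0 < d i)) (hx0 : x ≠ 0) :
    0 < form X x := by
  rw [form_eq_sum hX B d h]
  have hrx : B.repr x ≠ 0 := fun hc => hx0 (by simpa using B.repr.map_eq_zero_iff.mp hc)
  obtain ⟨j, hj⟩ : ∃ j, B.repr x j ≠ 0 := by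
    by_contra hc; push_neg at hc; exact hrx (by ext i; simpa using hc i)
  have hdj : 0 < d j := by
    by_contra hc
    exact hj (hx j (by simp [hc]))
  apply Finset.sum_pos'
  · intro i _
    by_cases hi : 0 < d i
    · positivity
    · have : B.repr x i = 0 := hx i (by simp [hi])
      simp [this]
  · exact ⟨j, Finset.mem_univ j, mul_pos hdj (pow_pos (norm_pos_iff.mpr hj) 2)⟩

lemma form_neg_on {X : Matrix (Fin n) (Fin n) ℂ} (hX : X.IsHermitian)
    (B : OrthonormalBasis (Fin n) ℂ (EuclideanSpace ℂ (Fin n))) (d : Fin n → ℝ)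
    (h : ∀ i, Matrix.toEuclideanLin X (B i) = (d i : ℂ) • B i)
    (x : EuclideanSpace ℂ (Fin n))
    (hx : x ∈ coordSupp B (Finset.univ.filter fun i => d i < 0)) (hx0 : x ≠ 0) :
    form X x < 0 := by
  have hneg : 0 < form (-X) x := by
    apply form_pos_on hX.neg B (fun i => -d i) _ x _ hx0
    · intro i
      rw [map_neg, LinearMap.neg_apply, h i]
      push_cast
      rw [neg_smul]
    · simpa using hx
  have : form (-X) x = - form X x := by
    simp [form, inner_neg_right]
  linarith [hneg, this ▸ hneg]



lemma posCount_le_of_nonpos {X : Matrix (Fin n) (Fin n) ℂ} (hX : X.IsHermitian) {k : ℕ}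
    (V : Submodule ℂ (EuclideanSpace ℂ (Fin n))) (hdim : n - k ≤ Module.finrank ℂ V)
    (hneg : ∀ x ∈ V, form X x ≤ 0) : posCount hX ≤ k := by
  classical
  set t := Finset.univ.filter fun i => 0 < hX.eigenvalues i with ht
  have hcount : posCount hX = t.card := by
    rw [posCount, Nat.card_eq_fintype_card, Fintype.card_subtype]
  have hdisj : Disjoint (coordSupp hX.eigenvectorBasis t) V := by
    rw [Submodule.disjoint_def]
    intro x hx1 hx2
    by_contra hx0
    have h1 := form_pos_on hX hX.eigenvectorBasis hX.eigenvalues (eigen_canonical hX) x hx1 hx0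
    linarith [hneg x hx2]
  have hfin := Submodule.finrank_add_finrank_le_of_disjoint hdisj
  have hE : Module.finrank ℂ (EuclideanSpace ℂ (Fin n)) = n := by
    rw [finrank_euclideanSpace, Fintype.card_fin]
  rw [finrank_coordSupp, hE] at hfin
  omega

lemma negCount_le_of_nonneg {X : Matrix (Fin n) (Fin n) ℂ} (hX : X.IsHermitian) {k : ℕ}
    (V : Submodule ℂ (EuclideanSpace ℂ (Fin n))) (hdim : n - k ≤ Module.finrank ℂ V)
    (hpos : ∀ x ∈ V, 0 ≤ form X x) : negCount hX ≤ k := by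
  classical
  set t := Finset.univ.filter fun i => hX.eigenvalues i < 0 with ht
  have hcount : negCount hX = t.card := by
    rw [negCount, Nat.card_eq_fintype_card, Fintype.card_subtype]
  have hdisj : Disjoint (coordSupp hX.eigenvectorBasis t) V := by
    rw [Submodule.disjoint_def]
    intro x hx1 hx2
    by_contra hx0
    have h1 := form_neg_on hX hX.eigenvectorBasis hX.eigenvalues (eigen_canonical hX) x hx1 hx0
    linarith [hpos x hx2]
  have hfin := Submodule.finrank_add_finrank_le_of_disjoint hdisj
  have hE : Module.finrank ℂ (EuclideanSpace ℂ (Fin n)) = n := by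
    rw [finrank_euclideanSpace, Fintype.card_fin]
  rw [finrank_coordSupp, hE] at hfin
  omega

lemma posCount_le_card {X : Matrix (Fin n) (Fin n) ℂ} (hX : X.IsHermitian)
    (B : OrthonormalBasis (Fin n) ℂ (EuclideanSpace ℂ (Fin n))) (d : Fin n → ℝ)
    (h : ∀ i, Matrix.toEuclideanLin X (B i) = (d i : ℂ) • B i) :
    posCount hX ≤ (Finset.univ.filter fun i => 0 < d i).card := by
  classical
  apply posCount_le_of_nonpos hX (coordSupp B (Finset.univ.filter fun i => ¬ 0 < d i))
  · rw [finrank_coordSupp]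
    have := Finset.card_filter_add_card_filter_not
      (s := (Finset.univ : Finset (Fin n))) (p := fun i => 0 < d i)
    simp only [Finset.card_univ, Fintype.card_fin] at this
    omega
  · exact fun x hx => form_nonpos_on hX B d h x hx

lemma negCount_le_card {X : Matrix (Fin n) (Fin n) ℂ} (hX : X.IsHermitian)
    (B : OrthonormalBasis (Fin n) ℂ (EuclideanSpace ℂ (Fin n))) (d : Fin n → ℝ)
    (h : ∀ i, Matrix.toEuclideanLin X (B i) = (d i : ℂ) • B i) :
    negCount hX ≤ (Finset.univ.filter fun i => d i < 0).card := by
  classical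
  apply negCount_le_of_nonneg hX (coordSupp B (Finset.univ.filter fun i => ¬ d i < 0))
  · rw [finrank_coordSupp]
    have := Finset.card_filter_add_card_filter_not
      (s := (Finset.univ : Finset (Fin n))) (p := fun i => d i < 0)
    simp only [Finset.card_univ, Fintype.card_fin] at this
    omega
  · exact fun x hx => form_nonneg_on hX B d h x hx

lemma posCount_eq_card {X : Matrix (Fin n) (Fin n) ℂ} (hX : X.IsHermitian) :
    posCount hX = (Finset.univ.filter fun i => 0 < hX.eigenvalues i).card := by
  rw [posCount, Nat.card_eq_fintype_card, Fintype.card_subtype]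

lemma negCount_eq_card {X : Matrix (Fin n) (Fin n) ℂ} (hX : X.IsHermitian) :
    negCount hX = (Finset.univ.filter fun i => hX.eigenvalues i < 0).card := by
  rw [negCount, Nat.card_eq_fintype_card, Fintype.card_subtype]

lemma posCount_add_le {T S : Matrix (Fin n) (Fin n) ℂ} (hT : T.IsHermitian)
    (hS : S.IsHermitian) (hTS : (T + S).IsHermitian) :
    posCount hTS ≤ posCount hT + posCount hS := by
  classical
  apply posCount_le_of_nonpos hTS
    ((coordSupp hT.eigenvectorBasis (Finset.univ.filter fun i => ¬ 0 < hT.eigenvalues i)) ⊓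
     (coordSupp hS.eigenvectorBasis (Finset.univ.filter fun i => ¬ 0 < hS.eigenvalues i)))
  · have h3 := Submodule.finrank_sup_add_finrank_inf_eq
      (coordSupp hT.eigenvectorBasis (Finset.univ.filter fun i => ¬ 0 < hT.eigenvalues i))
      (coordSupp hS.eigenvectorBasis (Finset.univ.filter fun i => ¬ 0 < hS.eigenvalues i))
    rw [finrank_coordSupp, finrank_coordSupp] at h3
    have h4 := Submodule.finrank_le
      ((coordSupp hT.eigenvectorBasis (Finset.univ.filter fun i => ¬ 0 < hT.eigenvalues i)) ⊔
       (coordSupp hS.eigenvectorBasis (Finset.univ.filter fun i => ¬ 0 < hS.eigenvalues i)))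
    rw [finrank_euclideanSpace, Fintype.card_fin] at h4
    have h5 := Finset.card_filter_add_card_filter_not
      (s := (Finset.univ : Finset (Fin n))) (p := fun i => 0 < hT.eigenvalues i)
    have h6 := Finset.card_filter_add_card_filter_not
      (s := (Finset.univ : Finset (Fin n))) (p := fun i => 0 < hS.eigenvalues i)
    simp only [Finset.card_univ, Fintype.card_fin] at h5 h6
    rw [posCount_eq_card hT, posCount_eq_card hS]
    omega
  · intro x hx
    rw [Submodule.mem_inf] at hx
    rw [form_add]
    have hT0 := form_nonpos_on hT hT.eigenvectorBasis hT.eigenvalues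
      (eigen_canonical hT) x hx.1
    have hS0 := form_nonpos_on hS hS.eigenvectorBasis hS.eigenvalues
      (eigen_canonical hS) x hx.2
    linarith

lemma negCount_add_le {T S : Matrix (Fin n) (Fin n) ℂ} (hT : T.IsHermitian)
    (hS : S.IsHermitian) (hTS : (T + S).IsHermitian) :
    negCount hTS ≤ negCount hT + negCount hS := by
  classical
  apply negCount_le_of_nonneg hTS
    ((coordSupp hT.eigenvectorBasis (Finset.univ.filter fun i => ¬ hT.eigenvalues i < 0)) ⊓
     (coordSupp hS.eigenvectorBasis (Finset.univ.filter fun i => ¬ hS.eigenvalues i < 0)))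
  · have h3 := Submodule.finrank_sup_add_finrank_inf_eq
      (coordSupp hT.eigenvectorBasis (Finset.univ.filter fun i => ¬ hT.eigenvalues i < 0))
      (coordSupp hS.eigenvectorBasis (Finset.univ.filter fun i => ¬ hS.eigenvalues i < 0))
    rw [finrank_coordSupp, finrank_coordSupp] at h3
    have h4 := Submodule.finrank_le
      ((coordSupp hT.eigenvectorBasis (Finset.univ.filter fun i => ¬ hT.eigenvalues i < 0)) ⊔
       (coordSupp hS.eigenvectorBasis (Finset.univ.filter fun i => ¬ hS.eigenvalues i < 0)))
    rw [finrank_euclideanSpace, Fintype.card_fin] at h4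
    have h5 := Finset.card_filter_add_card_filter_not
      (s := (Finset.univ : Finset (Fin n))) (p := fun i => hT.eigenvalues i < 0)
    have h6 := Finset.card_filter_add_card_filter_not
      (s := (Finset.univ : Finset (Fin n))) (p := fun i => hS.eigenvalues i < 0)
    simp only [Finset.card_univ, Fintype.card_fin] at h5 h6
    rw [negCount_eq_card hT, negCount_eq_card hS]
    omega
  · intro x hx
    rw [Submodule.mem_inf] at hx
    rw [form_add]
    have hT0 := form_nonneg_on hT hT.eigenvectorBasis hT.eigenvalues
      (eigen_canonical hT) x hx.1
    have hS0 := form_nonneg_on hS hS.eigenvectorBasis hS.eigenvalues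
      (eigen_canonical hS) x hx.2
    linarith

lemma isHermitian_conj_diag {W : Matrix (Fin n) (Fin n) ℂ} (hW : W.IsHermitian)
    (d : Fin n → ℝ) :
    (((hW.eigenvectorUnitary : Matrix (Fin n) (Fin n) ℂ)
        * Matrix.diagonal (fun j => (d j : ℂ))
        * star (hW.eigenvectorUnitary : Matrix (Fin n) (Fin n) ℂ))).IsHermitian := by
  unfold Matrix.IsHermitian
  rw [Matrix.conjTranspose_mul, Matrix.conjTranspose_mul, Matrix.diagonal_conjTranspose]
  have h1 : (star (hW.eigenvectorUnitary : Matrix (Fin n) (Fin n) ℂ))ᴴ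
      = (hW.eigenvectorUnitary : Matrix (Fin n) (Fin n) ℂ) := by
    simp [Matrix.star_eq_conjTranspose]
  have h2 : star (fun j => (d j : ℂ)) = fun j => (d j : ℂ) := by
    funext j; simp [Complex.conj_ofReal]
  rw [h1, h2, Matrix.mul_assoc]
  rfl

lemma conj_diag_mulVec {W : Matrix (Fin n) (Fin n) ℂ} (hW : W.IsHermitian)
    (d : Fin n → ℝ) (i : Fin n) :
    Matrix.toEuclideanLin ((hW.eigenvectorUnitary : Matrix (Fin n) (Fin n) ℂ)
        * Matrix.diagonal (fun j => (d j : ℂ))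
        * star (hW.eigenvectorUnitary : Matrix (Fin n) (Fin n) ℂ))
      (hW.eigenvectorBasis i) = ((d i : ℝ) : ℂ) • hW.eigenvectorBasis i := by
  have hmv : ((hW.eigenvectorUnitary : Matrix (Fin n) (Fin n) ℂ)
      * Matrix.diagonal (fun j => (d j : ℂ))
      * star (hW.eigenvectorUnitary : Matrix (Fin n) (Fin n) ℂ)) *ᵥ ⇑(hW.eigenvectorBasis i)
      = (d i : ℂ) • ⇑(hW.eigenvectorBasis i) := by
    rw [← Matrix.mulVec_mulVec, ← Matrix.mulVec_mulVec,
      hW.star_eigenvectorUnitary_mulVec i, Matrix.diagonal_mulVec_single]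
    have : (Pi.single i ((d i : ℂ) * 1) : Fin n → ℂ)
        = (d i : ℂ) • (Pi.single i 1 : Fin n → ℂ) := by
      funext j
      by_cases hj : j = i
      · subst hj; simp
      · simp [Pi.single_eq_of_ne hj]
    rw [this, Matrix.mulVec_smul, hW.eigenvectorUnitary_mulVec]
  rw [toEuclideanLin_apply]
  have h0 : (WithLp.equiv 2 (Fin n → ℂ)) (hW.eigenvectorBasis i) = ⇑(hW.eigenvectorBasis i) := rfl
  rw [hmv]
  rfl

lemma split_exists {W : Matrix (Fin n) (Fin n) ℂ} (hW : W.IsHermitian) (p q r s : ℕ)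
    (hp : posCount hW ≤ p + r) (hq : negCount hW ≤ q + s) :
    ∃ (T S : Matrix (Fin n) (Fin n) ℂ) (hT : T.IsHermitian) (hS : S.IsHermitian),
      W = T + S ∧ posCount hT ≤ p ∧ negCount hT ≤ q ∧
        posCount hS ≤ r ∧ negCount hS ≤ s := by
  classical
  set pos := Finset.univ.filter fun i => 0 < hW.eigenvalues i with hposdef
  set neg := Finset.univ.filter fun i => hW.eigenvalues i < 0 with hnegdef
  have hposcard : pos.card = posCount hW := (posCount_eq_card hW).symm
  have hnegcard : neg.card = negCount hW := (negCount_eq_card hW).symm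
  obtain ⟨A1, hA1sub, hA1card⟩ :=
    Finset.exists_subset_card_eq (show min p pos.card ≤ pos.card from min_le_right _ _)
  obtain ⟨A2, hA2sub, hA2card⟩ :=
    Finset.exists_subset_card_eq (show min q neg.card ≤ neg.card from min_le_right _ _)
  have hA1pos : ∀ i ∈ A1, 0 < hW.eigenvalues i := by
    intro i hi
    have := hA1sub hi; rw [hposdef, Finset.mem_filter] at this; exact this.2
  have hA2neg : ∀ i ∈ A2, hW.eigenvalues i < 0 := by
    intro i hi
    have := hA2sub hi; rw [hnegdef, Finset.mem_filter] at this; exact this.2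
  set dT : Fin n → ℝ := fun i => if i ∈ A1 ∪ A2 then hW.eigenvalues i else 0 with hdT
  set dS : Fin n → ℝ := fun i => if i ∈ A1 ∪ A2 then 0 else hW.eigenvalues i with hdS
  set U := (hW.eigenvectorUnitary : Matrix (Fin n) (Fin n) ℂ) with hU
  refine ⟨U * Matrix.diagonal (fun j => (dT j : ℂ)) * star U,
    U * Matrix.diagonal (fun j => (dS j : ℂ)) * star U,
    isHermitian_conj_diag hW dT, isHermitian_conj_diag hW dS, ?_, ?_, ?_, ?_, ?_⟩
  · rw [← Matrix.add_mul, ← Matrix.mul_add, Matrix.diagonal_add]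
    have hdsum : (fun j => (dT j : ℂ) + (dS j : ℂ))
        = fun j => ((hW.eigenvalues j : ℝ) : ℂ) := by
      funext j
      simp only [hdT, hdS]
      by_cases hj : j ∈ A1 ∪ A2
      · rw [if_pos hj, if_pos hj]; simp
      · rw [if_neg hj, if_neg hj]; simp
    rw [hdsum]
    exact hW.spectral_theorem
  · -- posCount T ≤ p
    refine le_trans (posCount_le_card _ hW.eigenvectorBasis dT
      (conj_diag_mulVec hW dT)) ?_
    have : (Finset.univ.filter fun i => 0 < dT i) = A1 := by
      ext i
      simp only [Finset.mem_filter, Finset.mem_univ, true_and, hdT]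
      constructor
      · intro hi
        by_cases hmem : i ∈ A1 ∪ A2
        · rw [if_pos hmem] at hi
          rcases Finset.mem_union.mp hmem with h | h
          · exact h
          · exact absurd hi (not_lt.mpr (hA2neg i h).le)
        · rw [if_neg hmem] at hi; exact absurd hi (lt_irrefl 0)
      · intro hi
        rw [if_pos (Finset.mem_union_left _ hi)]
        exact hA1pos i hi
    rw [this, hA1card]
    exact le_trans (min_le_left _ _) (le_refl p)
  · -- negCount T ≤ q
    refine le_trans (negCount_le_card _ hW.eigenvectorBasis dT
      (conj_diag_mulVec hW dT)) ?_
    have : (Finset.univ.filter fun i => dT i < 0) = A2 := by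
      ext i
      simp only [Finset.mem_filter, Finset.mem_univ, true_and, hdT]
      constructor
      · intro hi
        by_cases hmem : i ∈ A1 ∪ A2
        · rw [if_pos hmem] at hi
          rcases Finset.mem_union.mp hmem with h | h
          · exact absurd hi (not_lt.mpr (hA1pos i h).le)
          · exact h
        · rw [if_neg hmem] at hi; exact absurd hi (lt_irrefl 0)
      · intro hi
        rw [if_pos (Finset.mem_union_right _ hi)]
        exact hA2neg i hi
    rw [this, hA2card]
    exact min_le_left _ _
  · -- posCount S ≤ r
    refine le_trans (posCount_le_card _ hW.eigenvectorBasis dS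
      (conj_diag_mulVec hW dS)) ?_
    have heq : (Finset.univ.filter fun i => 0 < dS i) = pos \ (A1 ∪ A2) := by
      ext i
      simp only [Finset.mem_filter, Finset.mem_univ, true_and, hdS, Finset.mem_sdiff,
        hposdef]
      constructor
      · intro hi
        by_cases hmem : i ∈ A1 ∪ A2
        · rw [if_pos hmem] at hi; exact absurd hi (lt_irrefl 0)
        · rw [if_neg hmem] at hi
          exact ⟨hi, hmem⟩
      · rintro ⟨hi, hmem⟩
        rw [if_neg hmem]; exact hi
    rw [heq]
    have hsub : pos \ (A1 ∪ A2) ⊆ pos \ A1 :=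
      Finset.sdiff_subset_sdiff (Finset.Subset.refl _) Finset.subset_union_left
    have hcard := Finset.card_le_card hsub
    rw [Finset.card_sdiff_of_subset hA1sub, hA1card] at hcard
    rw [hposcard] at *
    omega
  · -- negCount S ≤ s
    refine le_trans (negCount_le_card _ hW.eigenvectorBasis dS
      (conj_diag_mulVec hW dS)) ?_
    have heq : (Finset.univ.filter fun i => dS i < 0) = neg \ (A1 ∪ A2) := by
      ext i
      simp only [Finset.mem_filter, Finset.mem_univ, true_and, hdS, Finset.mem_sdiff,
        hnegdef]
      constructor
      · intro hi
        by_cases hmem : i ∈ A1 ∪ A2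
        · rw [if_pos hmem] at hi; exact absurd hi (lt_irrefl 0)
        · rw [if_neg hmem] at hi
          exact ⟨hi, hmem⟩
      · rintro ⟨hi, hmem⟩
        rw [if_neg hmem]; exact hi
    rw [heq]
    have hsub : neg \ (A1 ∪ A2) ⊆ neg \ A2 :=
      Finset.sdiff_subset_sdiff (Finset.Subset.refl _) Finset.subset_union_right
    have hcard := Finset.card_le_card hsub
    rw [Finset.card_sdiff_of_subset hA2sub, hA2card] at hcard
    rw [hnegcard] at *
    omega

end Aux

/-- `S^{p,q} + S^{r,s} = S^{p+r,q+s}`: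
(i) a sum of a Hermitian matrix with at most `p` positive / `q` negative eigenvalues and one
with at most `r` positive / `s` negative eigenvalues has at most `p+r` positive and `q+s`
negative eigenvalues; (ii) conversely every Hermitian matrix with at most `p+r` positive and
`q+s` negative eigenvalues splits as such a sum. -/
theorem stmt6 (n p q r s : ℕ) :
    (∀ (T S : Matrix (Fin n) (Fin n) ℂ) (hT : T.IsHermitian) (hS : S.IsHermitian)
        (hTS : (T + S).IsHermitian),
        posCount hT ≤ p → negCount hT ≤ q → posCount hS ≤ r → negCount hS ≤ s →
        posCount hTS ≤ p + r ∧ negCount hTS ≤ q + s)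
    ∧ (∀ (W : Matrix (Fin n) (Fin n) ℂ) (hW : W.IsHermitian),
        posCount hW ≤ p + r → negCount hW ≤ q + s →
        ∃ (T S : Matrix (Fin n) (Fin n) ℂ) (hT : T.IsHermitian) (hS : S.IsHermitian),
          W = T + S ∧ posCount hT ≤ p ∧ negCount hT ≤ q ∧
            posCount hS ≤ r ∧ negCount hS ≤ s) := by
  constructor
  · intro T S hT hS hTS h1 h2 h3 h4
    exact ⟨le_trans (posCount_add_le hT hS hTS) (add_le_add h1 h3),
      le_trans (negCount_add_le hT hS hTS) (add_le_add h2 h4)⟩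
  · intro W hW h1 h2
    exact split_exists hW p q r s h1 h2
end
end
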